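/- arXiv:2012.06394 — 4 statements merged into one kernel-verified Lean document; each statement's English description precedes it below -/
import Mathlib

section
/- A valid core inequality β̄₀ + Σ_{j=1}^n β̄_j x_j + β′ y ≥ 0 with strictly increasing coefficients β̄_1 < β̄_2 < … < β̄_n is a core facet of conv(G) if and only if it is satisfied exactly at (x^k, m(x^k)) for every k ∈ {0,…,n}; and in that case no other core inequality with the same β′ is a core facet of conv(G). -/
open Finset

/-- The symmetric multilinear polynomial `m(x) = ∑_{i=2}^n c_i ∑_{|J|=i} ∏_{j∈J} x_j`. -/
noncomputable def mPoly (n : ℕ) (c : ℕ → ℝ) (x : Fin n → ℝ) : ℝ :=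
  ∑ i ∈ Finset.Icc 2 n, c i *
    ∑ J ∈ Finset.powersetCard i (Finset.univ : Finset (Fin n)), ∏ j ∈ J, x j

/-- The box `X = [ℓ,u]^n`. -/
def Xbox (n : ℕ) (ℓ u : ℝ) : Set (Fin n → ℝ) :=
  {x | ∀ j, x j ∈ Set.Icc ℓ u}

/-- The graph `G = {(x,y) : x ∈ X, y = m(x)}`. -/
def Gset (n : ℕ) (ℓ u : ℝ) (c : ℕ → ℝ) : Set ((Fin n → ℝ) × ℝ) :=
  {p | p.1 ∈ Xbox n ℓ u ∧ p.2 = mPoly n c p.1}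

/-- The point `x^k` whose first `k` coordinates are `u` and remaining ones are `ℓ`. -/
def xpt (n : ℕ) (ℓ u : ℝ) (k : ℕ) : Fin n → ℝ :=
  fun j => if (j : ℕ) < k then u else ℓ

/-- `m(x^k)`. -/
noncomputable def mval (n : ℕ) (ℓ u : ℝ) (c : ℕ → ℝ) (k : ℕ) : ℝ :=
  mPoly n c (xpt n ℓ u k)

/-- `L_k(β₀,β) = β₀ + u ∑_{j=1}^k β_j + ℓ ∑_{j=k+1}^n β_j`. -/
noncomputable def Lk (n : ℕ) (ℓ u : ℝ) (β₀ : ℝ) (β : Fin n → ℝ) (k : ℕ) : ℝ :=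
  β₀ + u * ∑ j ∈ Finset.univ.filter (fun j : Fin n => (j : ℕ) < k), β j
     + ℓ * ∑ j ∈ Finset.univ.filter (fun j : Fin n => k ≤ (j : ℕ)), β j

/-- The left-hand side `β₀ + ∑_j β_j x_j + β′ y` of an inequality, at the point `p = (x,y)`. -/
noncomputable def ineqLhs (n : ℕ) (β₀ : ℝ) (β : Fin n → ℝ) (β' : ℝ)
    (p : (Fin n → ℝ) × ℝ) : ℝ :=
  β₀ + ∑ j, β j * p.1 j + β' * p.2

/-- A core inequality: `β′ ∈ {1,-1}` and nondecreasing coefficients `β₁ ≤ … ≤ βₙ`. -/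
def IsCore (n : ℕ) (β : Fin n → ℝ) (β' : ℝ) : Prop :=
  (β' = 1 ∨ β' = -1) ∧ Monotone β

/-- Validity of the inequality `β₀ + ∑_j β_j x_j + β′ y ≥ 0` on `conv(G)`. -/
def IsValid (n : ℕ) (ℓ u : ℝ) (c : ℕ → ℝ) (β₀ : ℝ) (β : Fin n → ℝ) (β' : ℝ) : Prop :=
  ∀ p ∈ convexHull ℝ (Gset n ℓ u c), 0 ≤ ineqLhs n β₀ β β' p

/-- The point `p` satisfies the inequality exactly (with equality). -/
def ExactAt (n : ℕ) (β₀ : ℝ) (β : Fin n → ℝ) (β' : ℝ) (p : (Fin n → ℝ) × ℝ) : Prop :=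
  ineqLhs n β₀ β β' p = 0

/-- Facet-defining: there are `n+1` affinely independent points of `conv(G)`
satisfying the inequality exactly. -/
def IsFacet (n : ℕ) (ℓ u : ℝ) (c : ℕ → ℝ) (β₀ : ℝ) (β : Fin n → ℝ) (β' : ℝ) : Prop :=
  ∃ pts : Fin (n + 1) → (Fin n → ℝ) × ℝ,
    AffineIndependent ℝ pts ∧
    ∀ i, pts i ∈ convexHull ℝ (Gset n ℓ u c) ∧ ExactAt n β₀ β β' (pts i)

/-- The point `(x^k, m(x^k))` of `G`. -/
noncomputable def vtx (n : ℕ) (ℓ u : ℝ) (c : ℕ → ℝ) (k : ℕ) : (Fin n → ℝ) × ℝ :=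
  (xpt n ℓ u k, mval n ℓ u c k)

/-! ### Auxiliary lemmas -/

-- permutation invariance
lemma mPoly_perm (n : ℕ) (c : ℕ → ℝ) (x : Fin n → ℝ) (σ : Equiv.Perm (Fin n)) :
    mPoly n c (x ∘ σ) = mPoly n c x := by
  unfold mPoly
  refine Finset.sum_congr rfl fun i _ => ?_
  congr 1
  refine Finset.sum_nbij' (fun J => J.map σ.toEmbedding) (fun J => J.map σ.symm.toEmbedding) ?_ ?_ ?_ ?_ ?_
  · intro J hJ
    simp only [Finset.mem_powersetCard] at hJ ⊢
    exact ⟨Finset.subset_univ _, by simp [hJ.2]⟩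
  · intro J hJ
    simp only [Finset.mem_powersetCard] at hJ ⊢
    exact ⟨Finset.subset_univ _, by simp [hJ.2]⟩
  · intro J _; ext a; simp
  · intro J _; ext a; simp
  · intro J _
    rw [Finset.prod_map]
    rfl

-- affine in each coordinate
lemma mPoly_update (n : ℕ) (c : ℕ → ℝ) (x : Fin n → ℝ) (j : Fin n) :
    ∃ P Q : ℝ, ∀ t, mPoly n c (Function.update x j t) = P + t * Q := by
  classical
  refine ⟨∑ i ∈ Finset.Icc 2 n, c i * ∑ J ∈ (Finset.powersetCard i (Finset.univ : Finset (Fin n))).filter (fun J => j ∉ J), ∏ a ∈ J, x a,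
         ∑ i ∈ Finset.Icc 2 n, c i * ∑ J ∈ (Finset.powersetCard i (Finset.univ : Finset (Fin n))).filter (fun J => j ∈ J), ∏ a ∈ J.erase j, x a, fun t => ?_⟩
  unfold mPoly
  rw [Finset.mul_sum, ← Finset.sum_add_distrib]
  refine Finset.sum_congr rfl fun i _ => ?_
  have hsplit := (Finset.sum_filter_add_sum_filter_not
    (Finset.powersetCard i (Finset.univ : Finset (Fin n))) (fun J => j ∈ J)
    (fun J => ∏ a ∈ J, Function.update x j t a))
  rw [← hsplit]
  have h1 : ∑ J ∈ (Finset.powersetCard i (Finset.univ : Finset (Fin n))).filter (fun J => j ∈ J),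
      ∏ a ∈ J, Function.update x j t a
      = ∑ J ∈ (Finset.powersetCard i (Finset.univ : Finset (Fin n))).filter (fun J => j ∈ J),
        t * ∏ a ∈ J.erase j, x a := by
    refine Finset.sum_congr rfl fun J hJ => ?_
    simp only [Finset.mem_filter] at hJ
    rw [← Finset.mul_prod_erase J _ hJ.2]
    simp only [Function.update_self]
    congr 1
    refine Finset.prod_congr rfl fun a ha => ?_
    rw [Function.update_of_ne (Finset.ne_of_mem_erase ha)]
  have h2 : ∑ J ∈ (Finset.powersetCard i (Finset.univ : Finset (Fin n))).filter (fun J => j ∉ J),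
      ∏ a ∈ J, Function.update x j t a
      = ∑ J ∈ (Finset.powersetCard i (Finset.univ : Finset (Fin n))).filter (fun J => j ∉ J),
        ∏ a ∈ J, x a := by
    refine Finset.sum_congr rfl fun J hJ => ?_
    simp only [Finset.mem_filter] at hJ
    refine Finset.prod_congr rfl fun a ha => ?_
    rw [Function.update_of_ne (by rintro rfl; exact hJ.2 ha)]
  rw [h1, h2, ← Finset.mul_sum]
  ring

section Main

variable {n : ℕ} {ℓ u : ℝ} {c : ℕ → ℝ}

/-- vertices of the box -/
def IsVert (n : ℕ) (ℓ u : ℝ) (v : Fin n → ℝ) : Prop := ∀ j, v j = ℓ ∨ v j = u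

lemma vert_mem_Xbox (hlu : ℓ ≤ u) {v : Fin n → ℝ} (hv : IsVert n ℓ u v) : v ∈ Xbox n ℓ u := by
  intro j
  rcases hv j with h | h <;> rw [h]
  · exact ⟨le_refl _, hlu⟩
  · exact ⟨hlu, le_refl _⟩

lemma xpt_isVert (k : ℕ) : IsVert n ℓ u (xpt n ℓ u k) := by
  intro j; unfold xpt; split <;> simp

lemma valid_at_vert {β₀ : ℝ} {β : Fin n → ℝ} {β' : ℝ} (hval : IsValid n ℓ u c β₀ β β')
    (hlu : ℓ ≤ u) {v : Fin n → ℝ} (hv : IsVert n ℓ u v) :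
    0 ≤ ineqLhs n β₀ β β' (v, mPoly n c v) := by
  refine hval _ (subset_convexHull ℝ _ ?_)
  exact ⟨vert_mem_Xbox hlu hv, rfl⟩

lemma valid_at_box {β₀ : ℝ} {β : Fin n → ℝ} {β' : ℝ} (hval : IsValid n ℓ u c β₀ β β')
    {x : Fin n → ℝ} (hx : x ∈ Xbox n ℓ u) :
    0 ≤ ineqLhs n β₀ β β' (x, mPoly n c x) := by
  refine hval _ (subset_convexHull ℝ _ ?_)
  exact ⟨hx, rfl⟩

/-- the u-set of a vertex -/
noncomputable def uset (n : ℕ) (u : ℝ) (v : Fin n → ℝ) : Finset (Fin n) :=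
  (Finset.univ : Finset (Fin n)).filter (fun j => v j = u)

lemma sum_xpt_succ (γ : Fin n → ℝ) {k : ℕ} (hk : k < n) :
    ∑ j, γ j * xpt n ℓ u (k+1) j = ∑ j, γ j * xpt n ℓ u k j + (u - ℓ) * γ ⟨k, hk⟩ := by
  have h : ∀ j : Fin n, γ j * xpt n ℓ u (k+1) j
      - γ j * xpt n ℓ u k j = if j = ⟨k, hk⟩ then (u - ℓ) * γ j else 0 := by
    intro j
    unfold xpt
    rcases eq_or_ne j ⟨k, hk⟩ with rfl | hj
    · simp [Nat.lt_irrefl]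
      ring
    · have : (j:ℕ) < k + 1 ↔ (j:ℕ) < k := by
        constructor
        · intro h'
          rcases Nat.lt_succ_iff_lt_or_eq.1 h' with h'' | h''
          · exact h''
          · exact absurd (Fin.ext h'' : j = ⟨k, hk⟩) hj
        · exact fun h' => Nat.lt_succ_of_lt h'
      simp [hj, this]
  have h2 := Finset.sum_congr rfl (fun j (_ : j ∈ (univ : Finset (Fin n))) => h j)
  rw [Finset.sum_sub_distrib] at h2
  rw [Finset.sum_ite_eq' univ (⟨k, hk⟩ : Fin n), if_pos (Finset.mem_univ _)] at h2
  linarith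

lemma affineIndependent_xpt_lift (hlu : ℓ < u) (y : ℕ → ℝ) :
    AffineIndependent ℝ (fun k : Fin (n+1) => ((xpt n ℓ u (k : ℕ), y (k:ℕ)) : (Fin n → ℝ) × ℝ)) := by
  rw [affineIndependent_iff]
  intro s w hw0 hsum i hi
  classical
  set W : Fin (n+1) → ℝ := fun i => if i ∈ s then w i else 0 with hW
  have hWsum : ∑ i, W i = 0 := by
    rw [hW, Finset.sum_ite_mem, Finset.univ_inter, hw0]
  have hWsumv : ∑ i, W i • ((xpt n ℓ u (i:ℕ), y (i:ℕ)) : (Fin n → ℝ) × ℝ) = 0 := by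
    rw [hW]
    rw [← Finset.sum_filter_add_sum_filter_not univ (· ∈ s)]
    have h2 : ∑ i ∈ univ.filter (· ∉ s), (if i ∈ s then w i else 0) • ((xpt n ℓ u (i:ℕ), y (i:ℕ)) : (Fin n → ℝ) × ℝ) = 0 := by
      refine Finset.sum_eq_zero fun i hi => ?_
      simp only [Finset.mem_filter] at hi
      simp [hi.2]
    rw [h2, add_zero]
    rw [Finset.filter_mem_eq_inter, Finset.univ_inter]
    rw [← hsum]
    exact Finset.sum_congr rfl fun i hi => by simp [hi]
  have hj : ∀ j : Fin n, ∑ i, W i * xpt n ℓ u (i:ℕ) j = 0 := by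
    intro j
    have := congrArg (fun p : (Fin n → ℝ) × ℝ => p.1 j) hWsumv
    simpa [Prod.fst_sum, Finset.sum_apply] using this
  set T : ℕ → ℝ := fun t => ∑ i ∈ univ.filter (fun i : Fin (n+1) => t ≤ (i:ℕ)), W i with hT
  have hT0 : T 0 = 0 := by
    rw [hT]
    simp only [Nat.zero_le, Finset.filter_true_of_mem, Finset.mem_univ, forall_true_iff]
    exact hWsum
  have hTtop : T (n+1) = 0 := by
    rw [hT]
    simp only []
    rw [Finset.filter_false_of_mem, Finset.sum_empty]
    intro i _
    simp only [not_le]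
    exact i.isLt
  have hTmid : ∀ j : Fin n, T ((j:ℕ)+1) = 0 := by
    intro j
    have key : ∑ i, W i * (xpt n ℓ u (i:ℕ) j - ℓ) = (u - ℓ) * T ((j:ℕ)+1) := by
      rw [hT]
      simp only []
      rw [Finset.mul_sum]
      rw [← Finset.sum_filter_add_sum_filter_not univ (fun i : Fin (n+1) => (j:ℕ)+1 ≤ (i:ℕ))]
      have hz : ∑ i ∈ univ.filter (fun i : Fin (n+1) => ¬((j:ℕ)+1 ≤ (i:ℕ))), W i * (xpt n ℓ u (i:ℕ) j - ℓ) = 0 := by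
        refine Finset.sum_eq_zero fun i hi => ?_
        simp only [Finset.mem_filter, not_le] at hi
        have : ¬ ((j:ℕ) < (i:ℕ)) := by omega
        simp [xpt, this]
      rw [hz, add_zero]
      refine Finset.sum_congr rfl fun i hi => ?_
      simp only [Finset.mem_filter] at hi
      have : (j:ℕ) < (i:ℕ) := by omega
      simp [xpt, this]
      ring
    have lhs0 : ∑ i, W i * (xpt n ℓ u (i:ℕ) j - ℓ) = 0 := by
      have hj' := hj j
      have h2 : ∑ i, W i * (xpt n ℓ u (i:ℕ) j - ℓ) = (∑ i, W i * xpt n ℓ u (i:ℕ) j) - ℓ * ∑ i, W i := by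
        rw [Finset.mul_sum, ← Finset.sum_sub_distrib]
        exact Finset.sum_congr rfl fun i _ => by ring
      rw [h2, hj', hWsum]
      ring
    have hthis := lhs0.symm.trans key
    have hne : u - ℓ ≠ 0 := by linarith
    rcases mul_eq_zero.mp hthis.symm with h | h
    · exact absurd h hne
    · exact h
  have hTall : ∀ t, t ≤ n + 1 → T t = 0 := by
    intro t ht
    rcases Nat.eq_or_lt_of_le ht with rfl | ht'
    · exact hTtop
    · rcases t with _ | t'
      · exact hT0
      · have ht'' : t' < n := by omega
        exact hTmid ⟨t', ht''⟩
  have hWzero : ∀ i : Fin (n+1), W i = 0 := by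
    intro i
    have hsplit : T (i:ℕ) = W i + T ((i:ℕ)+1) := by
      rw [hT]
      simp only []
      have : univ.filter (fun a : Fin (n+1) => (i:ℕ) ≤ (a:ℕ))
          = insert i (univ.filter (fun a : Fin (n+1) => (i:ℕ)+1 ≤ (a:ℕ))) := by
        ext a
        simp only [Finset.mem_filter, Finset.mem_insert, Finset.mem_univ, true_and]
        rw [Fin.ext_iff]
        omega
      rw [this, Finset.sum_insert]
      simp only [Finset.mem_filter]
      omega
    have h1 := hTall (i:ℕ) (by omega)
    have h2 := hTall ((i:ℕ)+1) (by omega)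
    rw [h1, h2] at hsplit
    linarith
  have := hWzero i
  rw [hW] at this
  simpa [hi] using this

lemma affineIndependent_vtx (hlu : ℓ < u) :
    AffineIndependent ℝ (fun k : Fin (n+1) => vtx n ℓ u c (k : ℕ)) :=
  affineIndependent_xpt_lift hlu (fun k => mval n ℓ u c k)

lemma card_bound {E : Type*} [NormedAddCommGroup E] [NormedSpace ℝ E] [FiniteDimensional ℝ E]
    {m N : ℕ} (q : Fin m → E) (pts : Fin (N+1) → E) (hai : AffineIndependent ℝ pts)
    (h : ∀ i, pts i ∈ convexHull ℝ (Set.range q)) : N + 1 ≤ m := by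
  rcases Nat.eq_zero_or_pos m with rfl | hm
  · exfalso
    have := h 0
    rw [Set.range_eq_empty, convexHull_empty] at this
    exact this
  have hrank : Module.finrank ℝ (vectorSpan ℝ (Set.range pts)) = N :=
    hai.finrank_vectorSpan (by simp)
  have hsub : Set.range pts ⊆ (affineSpan ℝ (Set.range q) : Set E) := by
    rintro _ ⟨i, rfl⟩
    exact (convexHull_subset_affineSpan _) (h i)
  have hle : vectorSpan ℝ (Set.range pts) ≤ vectorSpan ℝ (Set.range q) := by
    have h1 : affineSpan ℝ (Set.range pts) ≤ affineSpan ℝ (Set.range q) :=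
      affineSpan_le.mpr hsub
    have := AffineSubspace.direction_le h1
    rwa [direction_affineSpan, direction_affineSpan] at this
  have hq : Module.finrank ℝ (vectorSpan ℝ (Set.range q)) ≤ m - 1 :=
    finrank_vectorSpan_range_le ℝ q (by simp; omega)
  have := Submodule.finrank_mono hle
  omega


lemma ineqLhs_centerMass (γ₀ : ℝ) (γ : Fin n → ℝ) (β' : ℝ)
    {ι : Type*} (t : Finset ι) (w : ι → ℝ) (z : ι → (Fin n → ℝ) × ℝ)
    (hw1 : ∑ i ∈ t, w i = 1) :
    ineqLhs n γ₀ γ β' (t.centerMass w z) = ∑ i ∈ t, w i * ineqLhs n γ₀ γ β' (z i) := by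
  rw [Finset.centerMass_eq_of_sum_1 _ _ hw1]
  have h1 : (∑ i ∈ t, w i • z i).2 = ∑ i ∈ t, w i * (z i).2 := by
    rw [Prod.snd_sum]
    exact Finset.sum_congr rfl fun i _ => rfl
  have h2 : ∀ a, (∑ i ∈ t, w i • z i).1 a = ∑ i ∈ t, w i * (z i).1 a := by
    intro a
    rw [Prod.fst_sum, Finset.sum_apply]
    exact Finset.sum_congr rfl fun i _ => rfl
  unfold ineqLhs
  rw [h1]
  simp only [h2]
  have key : ∑ a, γ a * (∑ i ∈ t, w i * (z i).1 a) = ∑ i ∈ t, w i * (∑ a, γ a * (z i).1 a) := by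
    simp_rw [Finset.mul_sum]
    rw [Finset.sum_comm]
    exact Finset.sum_congr rfl fun i _ => sum_congr rfl fun a _ => by ring
  have expand : ∑ i ∈ t, w i * (γ₀ + ∑ a, γ a * (z i).1 a + β' * (z i).2)
      = (∑ i ∈ t, w i) * γ₀ + (∑ i ∈ t, w i * ∑ a, γ a * (z i).1 a)
        + ∑ i ∈ t, w i * (β' * (z i).2) := by
    rw [Finset.sum_mul, ← Finset.sum_add_distrib, ← Finset.sum_add_distrib]
    exact Finset.sum_congr rfl fun i _ => by ring
  rw [expand, hw1, one_mul, key]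
  have h3 : β' * (∑ i ∈ t, w i * (z i).2) = ∑ i ∈ t, w i * (β' * (z i).2) := by
    rw [Finset.mul_sum]
    exact Finset.sum_congr rfl fun i _ => by ring
  rw [h3]

/-- Zeros of a valid inequality on the box lie in the convex hull of its vertex zeros
(lifted to the graph). -/
lemma box_zero_mem_hull (hlu : ℓ < u) {γ₀ : ℝ} {γ : Fin n → ℝ} {β' : ℝ}
    (hval : IsValid n ℓ u c γ₀ γ β') (S : Set ((Fin n → ℝ) × ℝ))
    (hS : ∀ v : Fin n → ℝ, IsVert n ℓ u v → ineqLhs n γ₀ γ β' (v, mPoly n c v) = 0 →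
      (v, mPoly n c v) ∈ S) :
    ∀ x ∈ Xbox n ℓ u, ineqLhs n γ₀ γ β' (x, mPoly n c x) = 0 →
      (x, mPoly n c x) ∈ convexHull ℝ S := by
  classical
  suffices H : ∀ (d : ℕ) (x : Fin n → ℝ), x ∈ Xbox n ℓ u →
      (univ.filter (fun j => x j ≠ ℓ ∧ x j ≠ u)).card = d →
      ineqLhs n γ₀ γ β' (x, mPoly n c x) = 0 → (x, mPoly n c x) ∈ convexHull ℝ S by
    intro x hx hex
    exact H _ x hx rfl hex
  intro d
  induction d using Nat.strong_induction_on with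
  | _ d ih =>
    intro x hx hd hex
    by_cases hvert : IsVert n ℓ u x
    · exact subset_convexHull ℝ S (hS x hvert hex)
    · have hj : ∃ j, x j ≠ ℓ ∧ x j ≠ u := by
        by_contra hc
        push_neg at hc
        refine hvert fun j => ?_
        rcases eq_or_ne (x j) ℓ with h | h
        · exact Or.inl h
        · exact Or.inr (hc j h)
      obtain ⟨j, hjl, hju⟩ := hj
      have hxj : ℓ < x j ∧ x j < u := by
        have := hx j
        exact ⟨lt_of_le_of_ne this.1 (Ne.symm hjl), lt_of_le_of_ne this.2 hju⟩
      set lam : ℝ := (u - x j) / (u - ℓ) with hlam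
      have hune : u - ℓ > 0 := by linarith
      have hlam0 : 0 < lam := div_pos (by linarith) hune
      have hlam1 : lam < 1 := by
        rw [hlam, div_lt_one hune]
        linarith
      have hcomb : lam * ℓ + (1 - lam) * u = x j := by
        have h' : lam * (u - ℓ) = u - x j := by rw [hlam]; exact div_mul_cancel₀ _ (ne_of_gt hune)
        linarith
      set x0 := Function.update x j ℓ with hx0
      set x1 := Function.update x j u with hx1
      have hbox0 : x0 ∈ Xbox n ℓ u := by
        intro a
        rcases eq_or_ne a j with rfl | ha
        · rw [hx0]; simp [Set.mem_Icc]; linarith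
        · rw [hx0]; rw [Function.update_of_ne ha]; exact hx a
      have hbox1 : x1 ∈ Xbox n ℓ u := by
        intro a
        rcases eq_or_ne a j with rfl | ha
        · rw [hx1]; simp [Set.mem_Icc]; linarith
        · rw [hx1]; rw [Function.update_of_ne ha]; exact hx a
      have hconvx : ∀ a, lam * x0 a + (1 - lam) * x1 a = x a := by
        intro a
        rcases eq_or_ne a j with rfl | ha
        · rw [hx0, hx1]; simp [hcomb]
        · rw [hx0, hx1, Function.update_of_ne ha, Function.update_of_ne ha]; ring
      obtain ⟨P, Q, hPQ⟩ := mPoly_update n c x j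
      have hmx : mPoly n c x = P + x j * Q := by
        have := hPQ (x j)
        rwa [Function.update_eq_self] at this
      have hm0 : mPoly n c x0 = P + ℓ * Q := hPQ ℓ
      have hm1 : mPoly n c x1 = P + u * Q := hPQ u
      have hmcomb : mPoly n c x = lam * mPoly n c x0 + (1 - lam) * mPoly n c x1 := by
        rw [hmx, hm0, hm1, ← hcomb]
        ring
      have hsumcomb : ∑ a, γ a * x a
          = lam * (∑ a, γ a * x0 a) + (1 - lam) * (∑ a, γ a * x1 a) := by
        rw [Finset.mul_sum, Finset.mul_sum, ← Finset.sum_add_distrib]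
        refine Finset.sum_congr rfl fun a _ => ?_
        rw [← hconvx a]
        ring
      have hLcomb : ineqLhs n γ₀ γ β' (x, mPoly n c x)
          = lam * ineqLhs n γ₀ γ β' (x0, mPoly n c x0)
            + (1 - lam) * ineqLhs n γ₀ γ β' (x1, mPoly n c x1) := by
        unfold ineqLhs
        simp only []
        rw [hmcomb, hsumcomb]
        ring
      have hL0 : 0 ≤ ineqLhs n γ₀ γ β' (x0, mPoly n c x0) := valid_at_box hval hbox0
      have hL1 : 0 ≤ ineqLhs n γ₀ γ β' (x1, mPoly n c x1) := valid_at_box hval hbox1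
      have hz0 : ineqLhs n γ₀ γ β' (x0, mPoly n c x0) = 0 := by nlinarith [hex, hLcomb]
      have hz1 : ineqLhs n γ₀ γ β' (x1, mPoly n c x1) = 0 := by nlinarith [hex, hLcomb]
      have hjmem : j ∈ univ.filter (fun a => x a ≠ ℓ ∧ x a ≠ u) := by
        simp [hjl, hju]
      have hcard : ∀ y0 : Fin n → ℝ, (∀ a, a ≠ j → y0 a = x a) → (y0 j = ℓ ∨ y0 j = u) →
          (univ.filter (fun a => y0 a ≠ ℓ ∧ y0 a ≠ u)).card < d := by
        intro y0 hy0 hyj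
        have hsub : univ.filter (fun a => y0 a ≠ ℓ ∧ y0 a ≠ u)
            ⊆ (univ.filter (fun a => x a ≠ ℓ ∧ x a ≠ u)).erase j := by
          intro a ha
          simp only [Finset.mem_filter, Finset.mem_univ, true_and] at ha
          have haj : a ≠ j := by
            rintro rfl
            rcases hyj with h | h
            · exact ha.1 h
            · exact ha.2 h
          rw [Finset.mem_erase]
          refine ⟨haj, ?_⟩
          simp only [Finset.mem_filter, Finset.mem_univ, true_and]
          rw [← hy0 a haj]
          exact ha
        calc (univ.filter (fun a => y0 a ≠ ℓ ∧ y0 a ≠ u)).card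
            ≤ ((univ.filter (fun a => x a ≠ ℓ ∧ x a ≠ u)).erase j).card :=
              Finset.card_le_card hsub
          _ = d - 1 := by rw [Finset.card_erase_of_mem hjmem, hd]
          _ < d := by
              have : 0 < d := by
                rw [← hd]
                exact Finset.card_pos.mpr ⟨j, hjmem⟩
              omega
      have hmem0 : (x0, mPoly n c x0) ∈ convexHull ℝ S := by
        refine ih _ (hcard x0 (fun a ha => by rw [hx0, Function.update_of_ne ha]) ?_) x0 hbox0 rfl hz0
        rw [hx0]; simp
      have hmem1 : (x1, mPoly n c x1) ∈ convexHull ℝ S := by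
        refine ih _ (hcard x1 (fun a ha => by rw [hx1, Function.update_of_ne ha]) ?_) x1 hbox1 rfl hz1
        rw [hx1]; simp
      have heq : (x, mPoly n c x)
          = lam • ((x0, mPoly n c x0) : (Fin n → ℝ) × ℝ)
            + (1 - lam) • ((x1, mPoly n c x1) : (Fin n → ℝ) × ℝ) := by
        have hfst : x = lam • x0 + (1 - lam) • x1 := by
          funext a
          have := hconvx a
          simp only [Pi.add_apply, Pi.smul_apply, smul_eq_mul]
          linarith
        rw [Prod.ext_iff]
        constructor
        · simpa using hfst
        · simpa using hmcomb
      rw [heq]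
      exact (convex_convexHull ℝ S) hmem0 hmem1 hlam0.le (by linarith) (by ring)

/-- Every point of `conv(G)` satisfying a valid inequality exactly lies in the convex hull of
the lifted vertex zeros. -/
lemma exact_mem_hull (hlu : ℓ < u) {γ₀ : ℝ} {γ : Fin n → ℝ} {β' : ℝ}
    (hval : IsValid n ℓ u c γ₀ γ β') (S : Set ((Fin n → ℝ) × ℝ))
    (hS : ∀ v : Fin n → ℝ, IsVert n ℓ u v → ineqLhs n γ₀ γ β' (v, mPoly n c v) = 0 →
      (v, mPoly n c v) ∈ S)
    {p : (Fin n → ℝ) × ℝ} (hp : p ∈ convexHull ℝ (Gset n ℓ u c))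
    (hex : ineqLhs n γ₀ γ β' p = 0) : p ∈ convexHull ℝ S := by
  classical
  rw [_root_.convexHull_eq] at hp
  obtain ⟨ι, t, w, z, hw0, hw1, hz, hcm⟩ := hp
  have hLsum : ∑ i ∈ t, w i * ineqLhs n γ₀ γ β' (z i) = 0 := by
    rw [← ineqLhs_centerMass γ₀ γ β' t w z hw1, hcm, hex]
  have hterm : ∀ i ∈ t, w i * ineqLhs n γ₀ γ β' (z i) = 0 :=
    (Finset.sum_eq_zero_iff_of_nonneg (fun i hi =>
      mul_nonneg (hw0 i hi) (hval _ (subset_convexHull ℝ _ (hz i hi))))).mp hLsum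
  have hzmem : ∀ i ∈ t, w i ≠ 0 → z i ∈ convexHull ℝ S := by
    intro i hi hwi
    have hLzi : ineqLhs n γ₀ γ β' (z i) = 0 := by
      rcases mul_eq_zero.mp (hterm i hi) with h | h
      · exact absurd h hwi
      · exact h
    obtain ⟨hbox, hy⟩ := hz i hi
    have hzi : z i = ((z i).1, mPoly n c (z i).1) := Prod.ext rfl hy
    rw [hzi] at hLzi ⊢
    exact box_zero_mem_hull hlu hval S hS _ hbox hLzi
  set t' := t.filter (fun i => w i ≠ 0) with ht'
  have hw1' : ∑ i ∈ t', w i = 1 := by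
    rw [ht', Finset.sum_filter_ne_zero, hw1]
  have hcm' : t'.centerMass w z = p := by
    rw [ht', Finset.centerMass_filter_ne_zero, hcm]
  rw [← hcm']
  rw [(convex_convexHull ℝ S).convexHull_eq.symm]
  refine Finset.centerMass_mem_convexHull t' ?_ ?_ ?_
  · intro i hi
    exact hw0 i (Finset.mem_of_mem_filter i hi)
  · rw [hw1']; norm_num
  · intro i hi
    rw [ht', Finset.mem_filter] at hi
    exact hzmem i hi.1 hi.2

/-- If a vertex is not `x^k` (where `k` is its number of `u`-coordinates), it has an
"inversion pair". -/
lemma inv_pair (hlu : ℓ < u) {v : Fin n → ℝ} (hv : IsVert n ℓ u v)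
    (hne : v ≠ xpt n ℓ u (uset n u v).card) :
    ∃ i j : Fin n, (i:ℕ) < (uset n u v).card ∧ (uset n u v).card ≤ (j:ℕ) ∧ v i = ℓ ∧ v j = u := by
  classical
  obtain ⟨k, hk⟩ : ∃ k, k = (uset n u v).card := ⟨_, rfl⟩
  rw [← hk] at hne ⊢
  set I := univ.filter (fun j : Fin n => (j:ℕ) < k) with hI
  have hkn : k ≤ n := by
    rw [hk]
    exact (Finset.card_le_card (Finset.subset_univ _)).trans (by simp)
  have hcardI : I.card = k := by
    rcases eq_or_lt_of_le hkn with rfl | hkn'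
    · rw [hI, Finset.filter_true_of_mem (fun j _ => j.isLt), Finset.card_univ]
      simp
    · have hIeq : I = Finset.Iio (⟨k, hkn'⟩ : Fin n) := by
        ext a
        simp [hI, Finset.mem_Iio, Fin.lt_def]
      rw [hIeq, Fin.card_Iio]
  have hUneI : uset n u v ≠ I := by
    intro h
    apply hne
    funext j
    unfold xpt
    by_cases hj : (j:ℕ) < k
    · have : j ∈ uset n u v := by rw [h, hI]; simp [hj]
      rw [uset, Finset.mem_filter] at this
      simp [hj, this.2]
    · have : j ∉ uset n u v := by rw [h, hI]; simp [hj]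
      rw [uset, Finset.mem_filter] at this
      simp only [Finset.mem_univ, true_and] at this
      rcases hv j with h' | h'
      · simp [hj, h']
      · exact absurd h' this
  have hjex : ∃ j, j ∈ uset n u v ∧ j ∉ I := by
    by_contra hcon
    push_neg at hcon
    have hsub : uset n u v ⊆ I := fun a ha => hcon a ha
    exact hUneI (Finset.eq_of_subset_of_card_le hsub (by rw [hcardI]; exact le_of_eq hk))
  have hiex : ∃ i, i ∈ I ∧ i ∉ uset n u v := by
    by_contra hcon
    push_neg at hcon
    have hsub : I ⊆ uset n u v := fun a ha => hcon a ha
    exact hUneI (Finset.eq_of_subset_of_card_le hsub (by rw [hcardI]; exact le_of_eq hk.symm)).symm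
  obtain ⟨j, hjU, hjI⟩ := hjex
  obtain ⟨i, hiI, hiU⟩ := hiex
  rw [hI, Finset.mem_filter] at hiI hjI
  simp only [Finset.mem_univ, true_and, not_lt] at hiI hjI
  refine ⟨i, j, hiI, by omega, ?_, ?_⟩
  · rcases hv i with h | h
    · exact h
    · exfalso; apply hiU; rw [uset, Finset.mem_filter]; exact ⟨Finset.mem_univ _, h⟩
  · rw [uset, Finset.mem_filter] at hjU
    exact hjU.2

/-- Swapping an inversion pair of a vertex: effect on the inequality lhs. -/
lemma swap_facts (hlu : ℓ < u) (γ₀ : ℝ) (γ : Fin n → ℝ) (β' : ℝ)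
    {v : Fin n → ℝ} (hv : IsVert n ℓ u v) {i j : Fin n} (hvi : v i = ℓ) (hvj : v j = u) :
    IsVert n ℓ u (v ∘ Equiv.swap i j) ∧
    uset n u (v ∘ Equiv.swap i j) = insert i ((uset n u v).erase j) ∧
    ineqLhs n γ₀ γ β' (v ∘ Equiv.swap i j, mPoly n c (v ∘ Equiv.swap i j))
      = ineqLhs n γ₀ γ β' (v, mPoly n c v) + (γ i - γ j) * (u - ℓ) := by
  classical
  have hij : i ≠ j := by
    rintro rfl
    rw [hvi] at hvj
    exact absurd hvj (ne_of_lt hlu)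
  set w := v ∘ Equiv.swap i j with hw
  have hwi : w i = u := by rw [hw]; simp [Equiv.swap_apply_left, hvj]
  have hwj : w j = ℓ := by rw [hw]; simp [Equiv.swap_apply_right, hvi]
  have hwa : ∀ a, a ≠ i → a ≠ j → w a = v a := by
    intro a hai haj
    rw [hw]
    simp [Equiv.swap_apply_of_ne_of_ne hai haj]
  have hvert : IsVert n ℓ u w := by
    intro a
    rcases eq_or_ne a i with rfl | hai
    · exact Or.inr hwi
    rcases eq_or_ne a j with rfl | haj
    · exact Or.inl hwj
    · rw [hwa a hai haj]; exact hv a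
  refine ⟨hvert, ?_, ?_⟩
  · ext a
    simp only [uset, Finset.mem_filter, Finset.mem_univ, true_and, Finset.mem_insert,
      Finset.mem_erase]
    rcases eq_or_ne a i with rfl | hai
    · simp [hwi]
    rcases eq_or_ne a j with rfl | haj
    · simp [hwj, hij, ne_of_lt hlu, Ne.symm hij]
    · rw [hwa a hai haj]
      simp [hai, haj]
  · have hm : mPoly n c w = mPoly n c v := mPoly_perm n c v (Equiv.swap i j)
    have hsum : ∑ a, γ a * w a = ∑ a, γ a * v a + (γ i - γ j) * (u - ℓ) := by
      have hpt : ∀ a, γ a * w a - γ a * v a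
          = (if a = i then γ i * (u - ℓ) else 0) + (if a = j then γ j * (ℓ - u) else 0) := by
        intro a
        rcases eq_or_ne a i with rfl | hai
        · rw [hwi, hvi, if_pos rfl, if_neg hij]
          ring
        rcases eq_or_ne a j with rfl | haj
        · rw [hwj, hvj, if_neg (Ne.symm hij), if_pos rfl]
          ring
        · rw [hwa a hai haj, if_neg hai, if_neg haj]
          ring
      have h2 := Finset.sum_congr rfl (fun a (_ : a ∈ (univ : Finset (Fin n))) => hpt a)
      rw [Finset.sum_sub_distrib, Finset.sum_add_distrib,
        Finset.sum_ite_eq' univ i, Finset.sum_ite_eq' univ j,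
        if_pos (Finset.mem_univ _), if_pos (Finset.mem_univ _)] at h2
      nlinarith [h2]
    unfold ineqLhs
    simp only []
    rw [hm, hsum]
    ring

/-- Sorting a zero vertex of a valid monotone inequality yields a zero `x^k`. -/
lemma sorted_zero (hlu : ℓ < u) {γ₀ : ℝ} {γ : Fin n → ℝ} {β' : ℝ}
    (hmono : Monotone γ) (hval : IsValid n ℓ u c γ₀ γ β') :
    ∀ (N : ℕ) (v : Fin n → ℝ), (∑ a ∈ uset n u v, (a:ℕ)) = N → IsVert n ℓ u v →
      ineqLhs n γ₀ γ β' (v, mPoly n c v) = 0 →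
      ineqLhs n γ₀ γ β' (xpt n ℓ u (uset n u v).card,
        mPoly n c (xpt n ℓ u (uset n u v).card)) = 0 := by
  intro N
  induction N using Nat.strong_induction_on with
  | _ N ih =>
    intro v hμ hv hz
    by_cases hs : v = xpt n ℓ u (uset n u v).card
    · rw [← hs]
      exact hz
    · obtain ⟨i, j, hik, hkj, hvi, hvj⟩ := inv_pair hlu hv hs
      obtain ⟨hvert, husetw, hLw⟩ := swap_facts hlu γ₀ γ β' hv hvi hvj
      have hijn : (i:ℕ) < (j:ℕ) := by omega
      have hγij : γ i ≤ γ j := hmono (by rw [Fin.le_def]; omega)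
      have hLw0 : 0 ≤ ineqLhs n γ₀ γ β'
          (v ∘ Equiv.swap i j, mPoly n c (v ∘ Equiv.swap i j)) := valid_at_vert hval hlu.le hvert
      have hzw : ineqLhs n γ₀ γ β' (v ∘ Equiv.swap i j, mPoly n c (v ∘ Equiv.swap i j)) = 0 := by
        nlinarith [hLw, hLw0, hγij, hlu]
      have hjU : j ∈ uset n u v := by
        rw [uset, Finset.mem_filter]
        exact ⟨Finset.mem_univ _, hvj⟩
      have hiU : i ∉ uset n u v := by
        rw [uset, Finset.mem_filter]
        rintro ⟨-, h⟩
        rw [hvi] at h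
        exact absurd h (ne_of_lt hlu)
      have hinotin : i ∉ (uset n u v).erase j := fun h => hiU (Finset.mem_of_mem_erase h)
      have hcardw : (uset n u (v ∘ Equiv.swap i j)).card = (uset n u v).card := by
        rw [husetw, Finset.card_insert_of_notMem hinotin,
          Finset.card_erase_of_mem hjU]
        have : 0 < (uset n u v).card := Finset.card_pos.mpr ⟨j, hjU⟩
        omega
      have hμw : (∑ a ∈ uset n u (v ∘ Equiv.swap i j), (a:ℕ)) < N := by
        rw [husetw, Finset.sum_insert hinotin]
        have hv' : ∑ a ∈ uset n u v, (a:ℕ)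
            = (j:ℕ) + ∑ a ∈ (uset n u v).erase j, (a:ℕ) := by
          rw [← Finset.sum_insert (Finset.notMem_erase j _), Finset.insert_erase hjU]
        omega
      have := ih _ hμw (v ∘ Equiv.swap i j) rfl hvert hzw
      rwa [hcardw] at this

/-- Main engine: a valid inequality whose vertex zeros are all sorted, and which is
facet-defining, must be exact at every `x^k`. -/
lemma facet_forces_all_exact (hlu : ℓ < u) {γ₀ : ℝ} {γ : Fin n → ℝ} {β' : ℝ}
    (hval : IsValid n ℓ u c γ₀ γ β')
    (hsz : ∀ v : Fin n → ℝ, IsVert n ℓ u v → ineqLhs n γ₀ γ β' (v, mPoly n c v) = 0 →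
      v = xpt n ℓ u (uset n u v).card)
    (hfacet : IsFacet n ℓ u c γ₀ γ β') :
    ∀ k ≤ n, ExactAt n γ₀ γ β' (vtx n ℓ u c k) := by
  classical
  obtain ⟨pts, hai, hpts⟩ := hfacet
  set T : Finset (Fin (n+1)) :=
    univ.filter (fun k : Fin (n+1) => ineqLhs n γ₀ γ β' (vtx n ℓ u c (k:ℕ)) = 0) with hT
  set S : Set ((Fin n → ℝ) × ℝ) := ↑(T.image (fun k : Fin (n+1) => vtx n ℓ u c (k:ℕ))) with hS
  have hSmem : ∀ v : Fin n → ℝ, IsVert n ℓ u v →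
      ineqLhs n γ₀ γ β' (v, mPoly n c v) = 0 → (v, mPoly n c v) ∈ S := by
    intro v hv hz
    have hveq := hsz v hv hz
    have hkn : (uset n u v).card ≤ n :=
      (Finset.card_le_card (Finset.subset_univ _)).trans (by simp)
    have hvtx : (v, mPoly n c v) = vtx n ℓ u c (uset n u v).card := by
      rw [vtx, mval, ← hveq]
    rw [hS, hvtx]
    simp only [Finset.coe_image, Set.mem_image, Finset.mem_coe]
    refine ⟨⟨(uset n u v).card, by omega⟩, ?_, rfl⟩
    rw [hT, Finset.mem_filter]
    refine ⟨Finset.mem_univ _, ?_⟩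
    rw [← hvtx]
    exact hz
  have hmemhull : ∀ l, pts l ∈ convexHull ℝ S := by
    intro l
    exact exact_mem_hull hlu hval S hSmem (hpts l).1 (hpts l).2
  -- conclude every k is exact
  intro k hk
  by_contra hkex
  have hknotT : (⟨k, by omega⟩ : Fin (n+1)) ∉ T := by
    rw [hT, Finset.mem_filter]
    rintro ⟨-, h⟩
    exact hkex h
  have hTcard : T.card ≤ n := by
    have hlt : T.card < Fintype.card (Fin (n+1)) := by
      refine Finset.card_lt_card ?_
      rw [Finset.ssubset_univ_iff]
      intro h
      rw [h] at hknotT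
      exact hknotT (Finset.mem_univ _)
    rw [Fintype.card_fin] at hlt
    omega
  -- S is the range of a family indexed by `Fin T.card`
  set q : Fin T.card → (Fin n → ℝ) × ℝ :=
    fun i => vtx n ℓ u c ((T.orderIsoOfFin rfl i : Fin (n+1)) : ℕ) with hq
  have hSsub : S ⊆ Set.range q := by
    rintro p hp
    rw [hS] at hp
    simp only [Finset.coe_image, Set.mem_image, Finset.mem_coe] at hp
    obtain ⟨a, haT, rfl⟩ := hp
    exact ⟨(T.orderIsoOfFin rfl).symm ⟨a, haT⟩, by rw [hq]; simp⟩
  have hmemq : ∀ l, pts l ∈ convexHull ℝ (Set.range q) :=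
    fun l => convexHull_mono hSsub (hmemhull l)
  have := card_bound q pts hai hmemq
  omega

/-- Strictly monotone valid inequalities have all vertex zeros sorted. -/
lemma strict_sorted (hlu : ℓ < u) {γ₀ : ℝ} {γ : Fin n → ℝ} {β' : ℝ}
    (hstrict : StrictMono γ) (hval : IsValid n ℓ u c γ₀ γ β') :
    ∀ v : Fin n → ℝ, IsVert n ℓ u v → ineqLhs n γ₀ γ β' (v, mPoly n c v) = 0 →
      v = xpt n ℓ u (uset n u v).card := by
  intro v hv hz
  by_contra hne
  obtain ⟨i, j, hik, hkj, hvi, hvj⟩ := inv_pair hlu hv hne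
  obtain ⟨hvert, -, hLw⟩ := swap_facts hlu γ₀ γ β' hv hvi hvj
  have hγij : γ i < γ j := hstrict (by rw [Fin.lt_def]; omega)
  have hLw0 : 0 ≤ ineqLhs n γ₀ γ β'
      (v ∘ Equiv.swap i j, mPoly n c (v ∘ Equiv.swap i j)) := valid_at_vert hval hlu.le hvert
  nlinarith [hLw, hLw0, hγij, hlu]

lemma vtx_mem_convG (hlu : ℓ ≤ u) (k : ℕ) :
    vtx n ℓ u c k ∈ convexHull ℝ (Gset n ℓ u c) :=
  subset_convexHull ℝ _ ⟨vert_mem_Xbox hlu (xpt_isVert k), rfl⟩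

end Main

/-- A valid core inequality with strictly increasing coefficients is a
core facet iff it is satisfied exactly at `(x^k, m(x^k))` for every `k ∈ {0,…,n}`; and
in that case no other core inequality with the same `β′` is a core facet. -/
theorem stmt7 (n : ℕ) (hn : 2 ≤ n) (ℓ u : ℝ) (hlu : ℓ < u) (c : ℕ → ℝ)
    (β₀ : ℝ) (β : Fin n → ℝ) (β' : ℝ)
    (hβ' : β' = 1 ∨ β' = -1) (hstrict : StrictMono β)
    (hvalid : IsValid n ℓ u c β₀ β β') :
    (IsFacet n ℓ u c β₀ β β' ↔ ∀ k ≤ n, ExactAt n β₀ β β' (vtx n ℓ u c k)) ∧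
    (IsFacet n ℓ u c β₀ β β' →
      ∀ (γ₀ : ℝ) (γ : Fin n → ℝ), IsCore n γ β' → IsValid n ℓ u c γ₀ γ β' →
        IsFacet n ℓ u c γ₀ γ β' → γ₀ = β₀ ∧ γ = β) := by
  have hiff : IsFacet n ℓ u c β₀ β β' ↔ ∀ k ≤ n, ExactAt n β₀ β β' (vtx n ℓ u c k) := by
    constructor
    · intro hfacet
      exact facet_forces_all_exact hlu hvalid (strict_sorted hlu hstrict hvalid) hfacet
    · intro hall
      refine ⟨fun k : Fin (n+1) => vtx n ℓ u c (k:ℕ), affineIndependent_vtx hlu,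
        fun i => ⟨vtx_mem_convG hlu.le _, hall i (Nat.lt_succ_iff.mp i.isLt)⟩⟩
  refine ⟨hiff, ?_⟩
  intro hfacet γ₀ γ hcore hγvalid hγfacet
  have hβall : ∀ k ≤ n, ExactAt n β₀ β β' (vtx n ℓ u c k) := hiff.mp hfacet
  have hmono : Monotone γ := hcore.2
  by_cases hsz : ∀ v : Fin n → ℝ, IsVert n ℓ u v →
      ineqLhs n γ₀ γ β' (v, mPoly n c v) = 0 → v = xpt n ℓ u (uset n u v).card
  · have hγall := facet_forces_all_exact hlu hγvalid hsz hγfacet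
    have key : ∀ (k : ℕ) (hk : k < n), γ ⟨k, hk⟩ = β ⟨k, hk⟩ := by
      intro k hk
      have e1γ := hγall k (by omega)
      have e2γ := hγall (k+1) (by omega)
      have e1β := hβall k (by omega)
      have e2β := hβall (k+1) (by omega)
      simp only [ExactAt, ineqLhs, vtx, mval] at e1γ e2γ e1β e2β
      have hsγ := sum_xpt_succ (ℓ := ℓ) (u := u) γ hk
      have hsβ := sum_xpt_succ (ℓ := ℓ) (u := u) β hk
      have hprod : (u - ℓ) * γ ⟨k, hk⟩ = (u - ℓ) * β ⟨k, hk⟩ := by linarith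
      have hune : u - ℓ ≠ 0 := by linarith
      exact mul_left_cancel₀ hune hprod
    have hγβ : γ = β := by
      funext a
      have := key a.1 a.isLt
      simpa using this
    refine ⟨?_, hγβ⟩
    have e0γ := hγall 0 (by omega)
    have e0β := hβall 0 (by omega)
    rw [hγβ] at e0γ
    simp only [ExactAt, ineqLhs, vtx, mval] at e0γ e0β
    linarith
  · exfalso
    push_neg at hsz
    obtain ⟨v, hv, hz, hne⟩ := hsz
    obtain ⟨i, j, hik, hkj, hvi, hvj⟩ := inv_pair hlu hv hne
    obtain ⟨hvert, -, hLw⟩ := swap_facts hlu γ₀ γ β' hv hvi hvj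
    have hLw0 : 0 ≤ ineqLhs n γ₀ γ β'
        (v ∘ Equiv.swap i j, mPoly n c (v ∘ Equiv.swap i j)) :=
      valid_at_vert hγvalid hlu.le hvert
    have hγji : γ j ≤ γ i := by
      by_contra hcon
      push_neg at hcon
      have : (γ i - γ j) * (u - ℓ) < 0 :=
        mul_neg_of_neg_of_pos (by linarith) (by linarith)
      linarith
    have hkn : (uset n u v).card < n := by
      have := j.isLt
      omega
    obtain ⟨k', hk'⟩ : ∃ k', (uset n u v).card = k' + 1 := ⟨(uset n u v).card - 1, by omega⟩
    have ha1n : k' < n := by omega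
    have ha2n : k' + 1 < n := by omega
    -- the tie
    have htie : γ ⟨k', ha1n⟩ = γ ⟨k'+1, ha2n⟩ := by
      have h1 : γ i ≤ γ ⟨k', ha1n⟩ := hmono (by rw [Fin.le_def]; simp; omega)
      have h2 : γ ⟨k', ha1n⟩ ≤ γ ⟨k'+1, ha2n⟩ := hmono (by rw [Fin.le_def]; simp)
      have h3 : γ ⟨k'+1, ha2n⟩ ≤ γ j := hmono (by rw [Fin.le_def]; simp; omega)
      linarith
    -- exactness of γ at level k'+1 by sorting
    have hψk : ineqLhs n γ₀ γ β' (vtx n ℓ u c (k'+1)) = 0 := by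
      have := sorted_zero hlu hmono hγvalid _ v rfl hv hz
      rw [hk'] at this
      exact this
    -- nonnegativity of γ at levels k' and k'+2
    have hA0 : 0 ≤ ineqLhs n γ₀ γ β' (vtx n ℓ u c k') :=
      hγvalid _ (vtx_mem_convG hlu.le _)
    have hA2 : 0 ≤ ineqLhs n γ₀ γ β' (vtx n ℓ u c (k'+2)) :=
      hγvalid _ (vtx_mem_convG hlu.le _)
    -- exactness of β at levels k', k'+1, k'+2
    have hB0 := hβall k' (by omega)
    have hB1 := hβall (k'+1) (by omega)
    have hB2 := hβall (k'+2) (by omega)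
    simp only [ExactAt, ineqLhs, vtx, mval] at hψk hA0 hA2 hB0 hB1 hB2
    have hsγ1 := sum_xpt_succ (ℓ := ℓ) (u := u) γ ha1n
    have hsγ2 := sum_xpt_succ (ℓ := ℓ) (u := u) γ ha2n
    have hsβ1 := sum_xpt_succ (ℓ := ℓ) (u := u) β ha1n
    have hsβ2 := sum_xpt_succ (ℓ := ℓ) (u := u) β ha2n
    rw [htie] at hsγ1
    have hβlt : β ⟨k', ha1n⟩ < β ⟨k'+1, ha2n⟩ := hstrict (by rw [Fin.lt_def]; simp)
    have hprod : 0 < (u - ℓ) * (β ⟨k'+1, ha2n⟩ - β ⟨k', ha1n⟩) :=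
      mul_pos (by linarith) (by linarith)
    linarith
end

section
/- Let P = {(x,w) ∈ ℝ^n × ℝ^{𝒥} : F̂_K(x,w) ≥ 0 for all K ⊆ N} and T = {(x,w) ∈ ℝ^n × ℝ^{𝒥} : x ∈ X′ and w_J = Π_{j∈J} x_j for all J ∈ 𝒥}. Then P = conv(T); moreover P is a polytope with exactly 2^n extreme points, and at each extreme point (x,w) one has x_j ∈ {L_j, U_j} for all j ∈ N and w_J = Π_{j∈J} x_j for all J ∈ 𝒥. -/
open Finset

/-- The RLT multilinear polynomial
`F_K(x) = ∏_{j∈K} (x_j − L_j) · ∏_{j∉K} (U_j − x_j)`. -/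
noncomputable def FK (n : ℕ) (L U : Fin n → ℝ) (K : Finset (Fin n)) (x : Fin n → ℝ) : ℝ :=
  (∏ j ∈ K, (x j - L j)) * ∏ j ∈ Kᶜ, (U j - x j)

/-- The index set `𝒥 = {J ⊆ N : |J| ≥ 2}` of the linearization variables. -/
def Jidx (n : ℕ) := {J : Finset (Fin n) // 2 ≤ J.card}

/-- The linearization `F̂_K(x,w)` of `F_K`, where `γ K J` is the coefficient of the
monomial `∏_{j∈J} x_j` in the multilinear expansion of `F_K`, and each monomial with
`|J| ≥ 2` is replaced by the variable `w_J`. -/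
noncomputable def FhatK (n : ℕ) (γ : Finset (Fin n) → Finset (Fin n) → ℝ)
    (K : Finset (Fin n)) (x : Fin n → ℝ) (w : Jidx n → ℝ) : ℝ :=
  ∑ J : Finset (Fin n), γ K J * (if h : 2 ≤ J.card then w ⟨J, h⟩ else ∏ j ∈ J, x j)

/-- Uniqueness of multilinear coefficients. -/
lemma rlt_multilinear_unique {n : ℕ} (c : Finset (Fin n) → ℝ)
    (h : ∀ x : Fin n → ℝ, ∑ J : Finset (Fin n), c J * ∏ j ∈ J, x j = 0) :
    ∀ J, c J = 0 := by
  have hpow : ∀ S : Finset (Fin n), ∑ J ∈ S.powerset, c J = 0 := by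
    intro S
    have hx := h (fun j => if j ∈ S then 1 else 0)
    have hprod : ∀ J : Finset (Fin n),
        (∏ j ∈ J, (if j ∈ S then (1:ℝ) else 0)) = if J ⊆ S then 1 else 0 := by
      intro J
      by_cases hJS : J ⊆ S
      · rw [if_pos hJS]
        exact Finset.prod_eq_one (fun j hj => if_pos (hJS hj))
      · rw [if_neg hJS]
        obtain ⟨j, hjJ, hjS⟩ := Finset.not_subset.mp hJS
        exact Finset.prod_eq_zero hjJ (if_neg hjS)
    simp only [hprod, mul_ite, mul_one, mul_zero] at hx
    rw [← Finset.sum_filter] at hx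
    rw [← hx]
    congr 1
    ext J
    simp [Finset.mem_powerset]
  intro J
  induction J using Finset.strongInduction with
  | _ S ih =>
    have h1 := hpow S
    rw [← Finset.add_sum_erase _ _ (Finset.mem_powerset_self S)] at h1
    have h2 : ∑ J ∈ (S.powerset).erase S, c J = 0 := by
      apply Finset.sum_eq_zero
      intro J hJ
      rw [Finset.mem_erase, Finset.mem_powerset] at hJ
      exact ih J (lt_of_le_of_ne hJ.2 hJ.1)
    rw [h2, add_zero] at h1
    exact h1

/-- The corner point of the box indexed by `K`. -/
noncomputable def rltCorner {n : ℕ} (L U : Fin n → ℝ) (K : Finset (Fin n)) : Fin n → ℝ :=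
  fun j => if j ∈ K then U j else L j

/-- Factorization identity (★). -/
lemma rlt_star {n : ℕ} (L U : Fin n → ℝ) (J₀ : Finset (Fin n)) (x : Fin n → ℝ) :
    ∑ K : Finset (Fin n), (∏ j ∈ J₀, rltCorner L U K j) * FK n L U K x
      = (∏ j, (U j - L j)) * ∏ j ∈ J₀, x j := by
  have hpa := Finset.prod_add (fun j => (x j - L j) * (if j ∈ J₀ then U j else 1))
    (fun j => (U j - x j) * (if j ∈ J₀ then L j else 1)) Finset.univ
  rw [Finset.powerset_univ] at hpa
  have hl : ∏ j : Fin n, ((x j - L j) * (if j ∈ J₀ then U j else 1)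
      + (U j - x j) * (if j ∈ J₀ then L j else 1))
      = (∏ j, (U j - L j)) * ∏ j ∈ J₀, x j := by
    have hfac : ∀ j : Fin n, ((x j - L j) * (if j ∈ J₀ then U j else 1)
        + (U j - x j) * (if j ∈ J₀ then L j else 1))
        = (U j - L j) * (if j ∈ J₀ then x j else 1) := by
      intro j
      by_cases hj : j ∈ J₀ <;> simp [hj] <;> ring
    rw [Finset.prod_congr rfl (fun j _ => hfac j), Finset.prod_mul_distrib,
      Finset.prod_ite_mem Finset.univ J₀ x, Finset.univ_inter]
  rw [hl] at hpa
  rw [hpa]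
  apply Finset.sum_congr rfl
  intro K _
  rw [Finset.prod_mul_distrib, Finset.prod_mul_distrib]
  have hc : Kᶜ = Finset.univ \ K := by simp [Finset.compl_eq_univ_sdiff]
  rw [FK, ← hc]
  have h1 : (∏ j ∈ K, (if j ∈ J₀ then U j else 1)) * ∏ j ∈ Kᶜ, (if j ∈ J₀ then L j else 1)
      = ∏ j ∈ J₀, rltCorner L U K j := by
    rw [Finset.prod_ite_mem K J₀ U, Finset.prod_ite_mem Kᶜ J₀ L]
    unfold rltCorner
    rw [Finset.prod_ite]
    congr 1 <;> apply Finset.prod_congr _ (fun _ _ => rfl) <;>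
      · ext j; simp [Finset.mem_filter, Finset.mem_inter, and_comm]
  rw [← h1]
  ring

/-- Coefficient identity (†). -/
lemma rlt_dagger {n : ℕ} (L U : Fin n → ℝ) (γ : Finset (Fin n) → Finset (Fin n) → ℝ)
    (hγ : ∀ (K : Finset (Fin n)) (x : Fin n → ℝ),
      FK n L U K x = ∑ J : Finset (Fin n), γ K J * ∏ j ∈ J, x j)
    (J J₀ : Finset (Fin n)) :
    ∑ K : Finset (Fin n), γ K J * ∏ j ∈ J₀, rltCorner L U K j
      = if J = J₀ then ∏ j, (U j - L j) else 0 := by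
  set C : ℝ := ∏ j, (U j - L j) with hC
  have h0 : ∀ x : Fin n → ℝ, ∑ J' : Finset (Fin n),
      ((∑ K : Finset (Fin n), γ K J' * ∏ j ∈ J₀, rltCorner L U K j)
        - (if J' = J₀ then C else 0)) * ∏ j ∈ J', x j = 0 := by
    intro x
    simp only [sub_mul, Finset.sum_sub_distrib]
    have hA : ∑ J' : Finset (Fin n),
        (∑ K : Finset (Fin n), γ K J' * ∏ j ∈ J₀, rltCorner L U K j) * ∏ j ∈ J', x j
        = C * ∏ j ∈ J₀, x j := by
      simp only [Finset.sum_mul]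
      rw [Finset.sum_comm, ← rlt_star L U J₀ x]
      apply Finset.sum_congr rfl
      intro K _
      rw [hγ K x, Finset.mul_sum]
      apply Finset.sum_congr rfl
      intro J' _
      ring
    have hB : ∑ J' : Finset (Fin n), (if J' = J₀ then C else 0) * ∏ j ∈ J', x j
        = C * ∏ j ∈ J₀, x j := by
      simp only [ite_mul, zero_mul]
      rw [Finset.sum_ite_eq' Finset.univ J₀ (fun J' => C * ∏ j ∈ J', x j)]
      simp
    rw [hA, hB, sub_self]
  have := rlt_multilinear_unique _ h0 J
  linarith [this]

/-- The key linear identity for `F̂`. -/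
lemma rlt_key {n : ℕ} (L U : Fin n → ℝ) (γ : Finset (Fin n) → Finset (Fin n) → ℝ)
    (hγ : ∀ (K : Finset (Fin n)) (x : Fin n → ℝ),
      FK n L U K x = ∑ J : Finset (Fin n), γ K J * ∏ j ∈ J, x j)
    (x : Fin n → ℝ) (w : Jidx n → ℝ) (J₀ : Finset (Fin n)) :
    ∑ K : Finset (Fin n), FhatK n γ K x w * ∏ j ∈ J₀, rltCorner L U K j
      = (∏ j, (U j - L j)) * (if h : 2 ≤ J₀.card then w ⟨J₀, h⟩ else ∏ j ∈ J₀, x j) := by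
  unfold FhatK
  simp only [Finset.sum_mul]
  rw [Finset.sum_comm]
  have hterm : ∀ J : Finset (Fin n),
      ∑ K : Finset (Fin n), γ K J * (if h : 2 ≤ J.card then w ⟨J, h⟩ else ∏ j ∈ J, x j)
        * ∏ j ∈ J₀, rltCorner L U K j
      = if J = J₀ then (∏ j, (U j - L j))
          * (if h : 2 ≤ J.card then w ⟨J, h⟩ else ∏ j ∈ J, x j) else 0 := by
    intro J
    have h1 : ∑ K : Finset (Fin n), γ K J * (if h : 2 ≤ J.card then w ⟨J, h⟩ else ∏ j ∈ J, x j)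
        * ∏ j ∈ J₀, rltCorner L U K j
        = (∑ K : Finset (Fin n), γ K J * ∏ j ∈ J₀, rltCorner L U K j)
          * (if h : 2 ≤ J.card then w ⟨J, h⟩ else ∏ j ∈ J, x j) := by
      rw [Finset.sum_mul]
      apply Finset.sum_congr rfl
      intro K _
      ring
    rw [h1, rlt_dagger L U γ hγ J J₀]
    split_ifs <;> ring
  rw [Finset.sum_congr rfl (fun J _ => hterm J)]
  have h2 : ∀ J : Finset (Fin n),
      (if J = J₀ then (∏ j, (U j - L j))
        * (if h : 2 ≤ J.card then w ⟨J, h⟩ else ∏ j ∈ J, x j) else 0)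
      = if J = J₀ then (fun J' => (∏ j, (U j - L j))
        * (if h : 2 ≤ J'.card then w ⟨J', h⟩ else ∏ j ∈ J', x j)) J else 0 := fun _ => rfl
  rw [Finset.sum_congr rfl (fun J _ => h2 J), Finset.sum_ite_eq' Finset.univ J₀]
  simp

/-- `F̂_K` is affine. -/
lemma rlt_affine {n : ℕ} (γ : Finset (Fin n) → Finset (Fin n) → ℝ) (K : Finset (Fin n))
    (a b : ℝ) (hab : a + b = 1) (p q : (Fin n → ℝ) × (Jidx n → ℝ)) :
    FhatK n γ K (a • p + b • q).1 (a • p + b • q).2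
      = a * FhatK n γ K p.1 p.2 + b * FhatK n γ K q.1 q.2 := by
  unfold FhatK
  rw [Finset.mul_sum, Finset.mul_sum, ← Finset.sum_add_distrib]
  apply Finset.sum_congr rfl
  intro J _
  by_cases h : 2 ≤ J.card
  · simp only [dif_pos h, Prod.snd_add, Prod.smul_snd, Pi.add_apply, Pi.smul_apply,
      smul_eq_mul]
    change γ K J * (a * p.2 ⟨J, h⟩ + b * q.2 ⟨J, h⟩) = _
    ring
  · simp only [dif_neg h]
    push_neg at h
    interval_cases hc : J.card
    · have hJ : J = ∅ := Finset.card_eq_zero.mp hc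
      subst hJ
      simp only [Finset.prod_empty, mul_one]
      linear_combination (-(γ K ∅)) * hab
    · obtain ⟨j, hj⟩ := Finset.card_eq_one.mp hc
      subst hj
      simp only [Finset.prod_singleton, Prod.fst_add, Prod.smul_fst, Pi.add_apply,
        Pi.smul_apply, smul_eq_mul]
      ring

/-- `P = conv(T)`; moreover `P` is a polytope with exactly `2^n`
extreme points, and at each extreme point `(x,w)` one has `x_j ∈ {L_j,U_j}` for all `j`
and `w_J = ∏_{j∈J} x_j` for all `J ∈ 𝒥`. -/
theorem stmt10 (n : ℕ) (hn : 1 ≤ n) (L U : Fin n → ℝ) (hLU : ∀ j, L j < U j)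
    (γ : Finset (Fin n) → Finset (Fin n) → ℝ)
    (hγ : ∀ (K : Finset (Fin n)) (x : Fin n → ℝ),
      FK n L U K x = ∑ J : Finset (Fin n), γ K J * ∏ j ∈ J, x j)
    (P T : Set ((Fin n → ℝ) × (Jidx n → ℝ)))
    (hP : P = {p | ∀ K : Finset (Fin n), 0 ≤ FhatK n γ K p.1 p.2})
    (hT : T = {p | (∀ j, p.1 j ∈ Set.Icc (L j) (U j)) ∧
                   ∀ J : Jidx n, p.2 J = ∏ j ∈ J.1, p.1 j}) :
    P = convexHull ℝ T ∧
    P = convexHull ℝ (Set.extremePoints ℝ P) ∧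
    (Set.extremePoints ℝ P).Finite ∧
    (Set.extremePoints ℝ P).ncard = 2 ^ n ∧
    ∀ p ∈ Set.extremePoints ℝ P,
      (∀ j, p.1 j = L j ∨ p.1 j = U j) ∧
      ∀ J : Jidx n, p.2 J = ∏ j ∈ J.1, p.1 j := by
  classical
  set C : ℝ := ∏ j, (U j - L j) with hC
  have hCpos : 0 < C := Finset.prod_pos (fun j _ => sub_pos.mpr (hLU j))
  set v : Finset (Fin n) → (Fin n → ℝ) × (Jidx n → ℝ) :=
    fun K => (rltCorner L U K, fun J => ∏ j ∈ J.1, rltCorner L U K j) with hv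
  -- sum of Fhat values is C
  have hsum : ∀ p : (Fin n → ℝ) × (Jidx n → ℝ),
      ∑ K : Finset (Fin n), FhatK n γ K p.1 p.2 = C := by
    intro p
    have h := rlt_key L U γ hγ p.1 p.2 ∅
    simpa using h
  -- reconstruction identity
  have hrecon : ∀ p : (Fin n → ℝ) × (Jidx n → ℝ),
      ∑ K : Finset (Fin n), FhatK n γ K p.1 p.2 • v K = C • p := by
    intro p
    have hx : (∑ K : Finset (Fin n), FhatK n γ K p.1 p.2 • v K).1 = (C • p).1 := by
      rw [Prod.fst_sum]
      funext j
      rw [Finset.sum_apply]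
      have h := rlt_key L U γ hγ p.1 p.2 {j}
      have hcard : ¬ (2 ≤ ({j} : Finset (Fin n)).card) := by simp
      rw [dif_neg hcard, Finset.prod_singleton] at h
      simpa [Finset.prod_singleton] using h
    have hw : (∑ K : Finset (Fin n), FhatK n γ K p.1 p.2 • v K).2 = (C • p).2 := by
      rw [Prod.snd_sum]
      funext J
      rw [Finset.sum_apply]
      have h := rlt_key L U γ hγ p.1 p.2 J.1
      rw [dif_pos J.2] at h
      simp [hv, hC]
      exact h
    exact Prod.ext hx hw
  -- injectivity of the Fhat value map
  have hinj : ∀ p q : (Fin n → ℝ) × (Jidx n → ℝ),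
      (∀ K, FhatK n γ K p.1 p.2 = FhatK n γ K q.1 q.2) → p = q := by
    intro p q h
    have h1 : C • p = C • q := by
      rw [← hrecon p, ← hrecon q]
      exact Finset.sum_congr rfl (fun K _ => by rw [h K])
    exact smul_right_injective _ (ne_of_gt hCpos) h1
  -- vertices lie in T
  have hvT : ∀ K, v K ∈ T := by
    intro K
    rw [hT]
    refine ⟨fun j => ?_, fun J => rfl⟩
    simp only [hv, rltCorner]
    by_cases hj : j ∈ K
    · simp [hj, Set.mem_Icc, (hLU j).le]
    · simp [hj, Set.mem_Icc, (hLU j).le]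
  -- T ⊆ P
  have hTP : T ⊆ P := by
    intro p hp
    rw [hT] at hp
    rw [hP]
    intro K
    have hF : FhatK n γ K p.1 p.2 = FK n L U K p.1 := by
      rw [hγ K p.1]
      unfold FhatK
      apply Finset.sum_congr rfl
      intro J _
      congr 1
      split_ifs with h
      · exact hp.2 ⟨J, h⟩
      · rfl
    rw [hF, FK]
    apply mul_nonneg
    · exact Finset.prod_nonneg fun j _ => sub_nonneg.mpr (hp.1 j).1
    · exact Finset.prod_nonneg fun j _ => sub_nonneg.mpr (hp.1 j).2
  -- P is convex
  have hPconv : Convex ℝ P := by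
    rw [hP]
    intro p hp q hq a b ha hb hab
    intro K
    rw [Set.mem_setOf_eq] at hp hq
    show 0 ≤ FhatK n γ K (a • p + b • q).1 (a • p + b • q).2
    rw [rlt_affine γ K a b hab p q]
    exact add_nonneg (mul_nonneg ha (hp K)) (mul_nonneg hb (hq K))
  -- P ⊆ convexHull (range v)
  have hPsub : P ⊆ convexHull ℝ (Set.range v) := by
    intro p hp
    rw [hP] at hp
    have hmem := Finset.centerMass_mem_convexHull (t := Finset.univ)
      (w := fun K => FhatK n γ K p.1 p.2) (z := v) (fun K _ => hp K)
      (by rw [hsum p]; exact hCpos) (fun K _ => Set.mem_range_self K)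
    have hcm : Finset.univ.centerMass (fun K => FhatK n γ K p.1 p.2) v = p := by
      rw [Finset.centerMass, hsum p, hrecon p, inv_smul_smul₀ (ne_of_gt hCpos)]
    rwa [hcm] at hmem
  have hvP : ∀ K, v K ∈ P := fun K => hTP (hvT K)
  have hrangeT : Set.range v ⊆ T := Set.range_subset_iff.mpr hvT
  have hconvTP : convexHull ℝ T ⊆ P := convexHull_min hTP hPconv
  have h1 : P = convexHull ℝ (Set.range v) :=
    Set.Subset.antisymm hPsub ((convexHull_mono hrangeT).trans hconvTP)
  have hPT : P = convexHull ℝ T :=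
    Set.Subset.antisymm (hPsub.trans (convexHull_mono hrangeT)) hconvTP
  -- Fhat values at vertices
  have hΦv : ∀ K K' : Finset (Fin n),
      FhatK n γ K' (v K).1 (v K).2 = if K' = K then C else 0 := by
    intro K K'
    have hF : FhatK n γ K' (v K).1 (v K).2 = FK n L U K' (rltCorner L U K) := by
      rw [hγ K' (rltCorner L U K)]
      unfold FhatK
      apply Finset.sum_congr rfl
      intro J _
      congr 1
      split_ifs with h
      · rfl
      · rfl
    rw [hF]
    by_cases hKK : K' = K
    · subst hKK
      rw [if_pos rfl, FK]
      have e1 : ∏ j ∈ K', (rltCorner L U K' j - L j) = ∏ j ∈ K', (U j - L j) :=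
        Finset.prod_congr rfl (fun j hj => by simp [rltCorner, hj])
      have e2 : ∏ j ∈ K'ᶜ, (U j - rltCorner L U K' j) = ∏ j ∈ K'ᶜ, (U j - L j) :=
        Finset.prod_congr rfl (fun j hj => by
          simp [rltCorner, (Finset.mem_compl.mp hj)])
      rw [e1, e2, Finset.prod_mul_prod_compl]
    · rw [if_neg hKK, FK]
      by_cases hsub : K' ⊆ K
      · obtain ⟨j, hjK, hjK'⟩ := Finset.exists_of_ssubset (lt_of_le_of_ne hsub hKK)
        have : U j - rltCorner L U K j = 0 := by simp [rltCorner, hjK]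
        rw [Finset.prod_eq_zero (Finset.mem_compl.mpr hjK') this, mul_zero]
      · obtain ⟨j, hjK', hjK⟩ := Finset.not_subset.mp hsub
        have : rltCorner L U K j - L j = 0 := by simp [rltCorner, hjK]
        rw [Finset.prod_eq_zero hjK' this, zero_mul]
  -- extreme points are exactly the vertices
  have hext : Set.extremePoints ℝ P = Set.range v := by
    apply Set.Subset.antisymm
    · intro p hp
      rw [h1] at hp
      exact extremePoints_convexHull_subset hp
    · rintro _ ⟨K, rfl⟩
      rw [mem_extremePoints]
      refine ⟨hvP K, ?_⟩
      intro x₁ hx₁ x₂ hx₂ hseg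
      rw [openSegment, Set.mem_setOf_eq] at hseg
      obtain ⟨a, b, ha, hb, hab, habv⟩ := hseg
      rw [hP] at hx₁ hx₂
      have hcombo : ∀ K' : Finset (Fin n),
          a * FhatK n γ K' x₁.1 x₁.2 + b * FhatK n γ K' x₂.1 x₂.2
            = if K' = K then C else 0 := by
        intro K'
        rw [← rlt_affine γ K' a b hab x₁ x₂, habv, hΦv K K']
      have hzero : ∀ K' : Finset (Fin n), K' ≠ K →
          FhatK n γ K' x₁.1 x₁.2 = 0 ∧ FhatK n γ K' x₂.1 x₂.2 = 0 := by
        intro K' hK'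
        have h := hcombo K'
        rw [if_neg hK'] at h
        have h1 := mul_nonneg ha.le (hx₁ K')
        have h2 := mul_nonneg hb.le (hx₂ K')
        constructor
        · have : a * FhatK n γ K' x₁.1 x₁.2 = 0 := by linarith
          exact (mul_eq_zero.mp this).resolve_left (ne_of_gt ha)
        · have : b * FhatK n γ K' x₂.1 x₂.2 = 0 := by linarith
          exact (mul_eq_zero.mp this).resolve_left (ne_of_gt hb)
      have hvals : ∀ (y : (Fin n → ℝ) × (Jidx n → ℝ)),
          (∀ K', FhatK n γ K' y.1 y.2 = 0 ∨ K' = K) →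
          (∀ K', FhatK n γ K' y.1 y.2 = FhatK n γ K' (v K).1 (v K).2) := by
        intro y hy K'
        rw [hΦv K K']
        by_cases hK' : K' = K
        · subst hK'
          rw [if_pos rfl]
          have hs := hsum y
          rw [← Finset.add_sum_erase _ _ (Finset.mem_univ K')] at hs
          have hrest : ∑ K'' ∈ Finset.univ.erase K', FhatK n γ K'' y.1 y.2 = 0 := by
            apply Finset.sum_eq_zero
            intro K'' hK''
            rcases hy K'' with h | h
            · exact h
            · exact absurd h (Finset.mem_erase.mp hK'').1
          rw [hrest, add_zero] at hs
          exact hs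
        · rw [if_neg hK']
          exact (hy K').resolve_right hK'
      have he1 : x₁ = v K := by
        apply hinj
        apply hvals
        intro K'
        by_cases hK' : K' = K
        · exact Or.inr hK'
        · exact Or.inl (hzero K' hK').1
      have he2 : x₂ = v K := by
        apply hinj
        apply hvals
        intro K'
        by_cases hK' : K' = K
        · exact Or.inr hK'
        · exact Or.inl (hzero K' hK').2
      exact ⟨he1, he2⟩
  -- injectivity of v
  have hvinj : Function.Injective v := by
    intro K K' h
    have h1 : rltCorner L U K = rltCorner L U K' := congrArg Prod.fst h
    ext j
    constructor
    · intro hj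
      by_contra hj'
      have := congrFun h1 j
      simp only [rltCorner, if_pos hj, if_neg hj'] at this
      exact (hLU j).ne' this
    · intro hj
      by_contra hj'
      have := congrFun h1 j
      simp only [rltCorner, if_neg hj', if_pos hj] at this
      exact (hLU j).ne this
  refine ⟨hPT, ?_, ?_, ?_, ?_⟩
  · rw [hext]; exact h1
  · rw [hext]; exact Set.finite_range v
  · rw [hext, ← Set.image_univ, ← Finset.coe_univ, ← Finset.coe_image,
      Set.ncard_coe_finset, Finset.card_image_of_injective _ hvinj, Finset.card_univ,
      Fintype.card_finset, Fintype.card_fin]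
  · intro p hp
    rw [hext] at hp
    obtain ⟨K, rfl⟩ := hp
    refine ⟨fun j => ?_, fun J => rfl⟩
    simp only [hv, rltCorner]
    by_cases hj : j ∈ K
    · right; simp [hj]
    · left; simp [hj]
end

section
/- For every multilinear polynomial p(x) = Σ_{J⊆N} α_J Π_{j∈J} x_j there exists a unique family of reals (π_K)_{K⊆N} such that p(x) = Σ_{K⊆N} π_K F_K(x) for all x ∈ ℝ^n; moreover, for each K ⊆ N, π_K = p(x̂^K) / F_K(x̂^K), where x̂^K is the vertex of X′ with x̂^K_j = U_j for j ∈ K and x̂^K_j = L_j for j ∉ K. -/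
open Finset

/-- A general multilinear polynomial `p(x) = ∑_{J⊆N} α_J ∏_{j∈J} x_j`. -/
noncomputable def pPoly (n : ℕ) (α : Finset (Fin n) → ℝ) (x : Fin n → ℝ) : ℝ :=
  ∑ J : Finset (Fin n), α J * ∏ j ∈ J, x j

/-- The vertex `x̂^K` of the box, with `x̂^K_j = U_j` for `j ∈ K` and `x̂^K_j = L_j` else. -/
def vertK (n : ℕ) (L U : Fin n → ℝ) (K : Finset (Fin n)) : Fin n → ℝ :=
  fun j => if j ∈ K then U j else L j

lemma FK_vert_self (n : ℕ) (L U : Fin n → ℝ) (K : Finset (Fin n)) :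
    FK n L U K (vertK n L U K) = ∏ j, (U j - L j) := by
  unfold FK vertK
  rw [← Finset.prod_mul_prod_compl K (fun j => U j - L j)]
  congr 1
  · exact Finset.prod_congr rfl fun j hj => by simp [hj]
  · exact Finset.prod_congr rfl fun j hj => by simp [Finset.mem_compl.mp hj]

lemma FK_vert_ne (n : ℕ) (L U : Fin n → ℝ) {K K' : Finset (Fin n)} (h : K ≠ K') :
    FK n L U K (vertK n L U K') = 0 := by
  unfold FK vertK
  by_cases hsub : K ⊆ K'
  · have hne : ¬ (K' ⊆ K) := fun h2 => h (Finset.Subset.antisymm hsub h2)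
    obtain ⟨j, hj1, hj2⟩ := Finset.not_subset.mp hne
    have : j ∈ Kᶜ := Finset.mem_compl.mpr hj2
    rw [Finset.prod_eq_zero this (by simp [hj1]), mul_zero]
  · obtain ⟨j, hj1, hj2⟩ := Finset.not_subset.mp hsub
    rw [Finset.prod_eq_zero hj1 (by simp [hj2]), zero_mul]

lemma monomial_eq (n : ℕ) (L U : Fin n → ℝ) (J : Finset (Fin n)) (x : Fin n → ℝ) :
    (∏ j ∈ J, x j) * ∏ j, (U j - L j)
      = ∑ K : Finset (Fin n), (∏ j ∈ J, vertK n L U K j) * FK n L U K x := by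
  have h := Finset.prod_add (fun j => (x j - L j) * (if j ∈ J then U j else 1))
      (fun j => (U j - x j) * (if j ∈ J then L j else 1)) Finset.univ
  rw [Finset.powerset_univ] at h
  have lhs : ∏ j, ((x j - L j) * (if j ∈ J then U j else 1)
      + (U j - x j) * (if j ∈ J then L j else 1))
      = (∏ j ∈ J, x j) * ∏ j, (U j - L j) := by
    have : ∀ j, (x j - L j) * (if j ∈ J then U j else 1)
        + (U j - x j) * (if j ∈ J then L j else 1)
        = (U j - L j) * (if j ∈ J then x j else 1) := by
      intro j; split_ifs <;> ring
    rw [Finset.prod_congr rfl (fun j _ => this j), Finset.prod_mul_distrib]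
    rw [Finset.prod_ite_mem Finset.univ J x, Finset.univ_inter]
    ring
  rw [lhs] at h
  rw [h]
  refine Finset.sum_congr rfl fun K _ => ?_
  rw [← Finset.compl_eq_univ_sdiff]
  rw [Finset.prod_mul_distrib, Finset.prod_mul_distrib]
  have e1 : (∏ j ∈ K, (if j ∈ J then U j else 1)) * ∏ j ∈ Kᶜ, (if j ∈ J then L j else 1)
      = ∏ j ∈ J, (if j ∈ K then U j else L j) := by
    rw [Finset.prod_ite_mem K J U, Finset.prod_ite_mem Kᶜ J L, Finset.prod_ite]
    congr 1
    · exact Finset.prod_congr (by ext j; simp [and_comm]) (fun _ _ => rfl)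
    · exact Finset.prod_congr (by ext j; simp [and_comm]) (fun _ _ => rfl)
  unfold FK vertK
  calc (∏ j ∈ K, (x j - L j)) * (∏ j ∈ K, if j ∈ J then U j else 1) *
        ((∏ j ∈ Kᶜ, (U j - x j)) * ∏ j ∈ Kᶜ, if j ∈ J then L j else 1)
      = ((∏ j ∈ K, (if j ∈ J then U j else 1)) * ∏ j ∈ Kᶜ, (if j ∈ J then L j else 1)) *
        ((∏ j ∈ K, (x j - L j)) * ∏ j ∈ Kᶜ, (U j - x j)) := by ring
    _ = _ := by rw [e1]

lemma pPoly_key (n : ℕ) (L U : Fin n → ℝ) (α : Finset (Fin n) → ℝ) (x : Fin n → ℝ) :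
    pPoly n α x * ∏ j, (U j - L j)
      = ∑ K : Finset (Fin n), pPoly n α (vertK n L U K) * FK n L U K x := by
  unfold pPoly
  rw [Finset.sum_mul]
  have step : ∀ J : Finset (Fin n), (α J * ∏ j ∈ J, x j) * ∏ j, (U j - L j)
      = ∑ K : Finset (Fin n), α J * ((∏ j ∈ J, vertK n L U K j) * FK n L U K x) := by
    intro J
    rw [mul_assoc, monomial_eq n L U J x, Finset.mul_sum]
  rw [Finset.sum_congr rfl fun J _ => step J, Finset.sum_comm]
  refine Finset.sum_congr rfl fun K _ => ?_
  rw [Finset.sum_mul]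
  exact Finset.sum_congr rfl fun J _ => by ring

/-- Every multilinear polynomial `p` has a unique representation
`p = ∑_K π_K F_K`, and the multipliers are `π_K = p(x̂^K) / F_K(x̂^K)`. -/
theorem stmt11 (n : ℕ) (hn : 1 ≤ n) (L U : Fin n → ℝ) (hLU : ∀ j, L j < U j)
    (α : Finset (Fin n) → ℝ) :
    (∃! π : Finset (Fin n) → ℝ,
      ∀ x, pPoly n α x = ∑ K : Finset (Fin n), π K * FK n L U K x) ∧
    ∀ π : Finset (Fin n) → ℝ,
      (∀ x, pPoly n α x = ∑ K : Finset (Fin n), π K * FK n L U K x) →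
      ∀ K, π K = pPoly n α (vertK n L U K) / FK n L U K (vertK n L U K) := by
  set c : ℝ := ∏ j, (U j - L j) with hc_def
  have hc : c ≠ 0 := ne_of_gt (Finset.prod_pos fun j _ => sub_pos.mpr (hLU j))
  set π₀ : Finset (Fin n) → ℝ := fun K => pPoly n α (vertK n L U K) / c with hπ₀
  have hP : ∀ x, pPoly n α x = ∑ K : Finset (Fin n), π₀ K * FK n L U K x := by
    intro x
    have : ∑ K : Finset (Fin n), π₀ K * FK n L U K x
        = (∑ K : Finset (Fin n), pPoly n α (vertK n L U K) * FK n L U K x) / c := by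
      rw [Finset.sum_div]
      exact Finset.sum_congr rfl fun K _ => (div_mul_eq_mul_div _ _ _)
    rw [this, ← pPoly_key n L U α x, mul_div_cancel_right₀ _ hc]
  have huniq : ∀ π : Finset (Fin n) → ℝ,
      (∀ x, pPoly n α x = ∑ K : Finset (Fin n), π K * FK n L U K x) →
      ∀ K, π K = pPoly n α (vertK n L U K) / c := by
    intro π hπ K₀
    have h := hπ (vertK n L U K₀)
    rw [Finset.sum_eq_single K₀ (fun K _ hne => by rw [FK_vert_ne n L U hne, mul_zero])
      (by simp)] at h
    rw [FK_vert_self] at h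
    rw [h, ← hc_def, mul_div_assoc, div_self hc, mul_one]
  refine ⟨⟨π₀, hP, fun π hπ => funext fun K => by rw [huniq π hπ K]⟩, fun π hπ K => ?_⟩
  rw [FK_vert_self]
  exact huniq π hπ K
end

section
/- Let β₀ + Σ_{j=1}^n β_j x_j + β′ y ≥ 0 be any inequality valid for conv(G), let x̃ ∈ X, and partition N into N₁ = {j : x̃_j = ℓ}, N₂ = {j : x̃_j = u}, N₃ = {j : ℓ < x̃_j < u}. Then the following are equivalent: (1) (x̃, m(x̃)) satisfies the inequality exactly; (2) (x̂, m(x̂)) satisfies the inequality exactly for every x̂ ∈ X with x̂_j = ℓ for all j ∈ N₁ and x̂_j = u for all j ∈ N₂; (3) (x̂, m(x̂)) satisfies the inequality exactly for every vertex x̂ of X with x̂_j = ℓ for all j ∈ N₁ and x̂_j = u for all j ∈ N₂. -/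
open Finset

section Aux

open Finset

variable {n : ℕ} {ℓ u : ℝ}

/-- Multilinear interpolation weights. -/
noncomputable def lamW (ℓ u : ℝ) (x : Fin n → ℝ) (S : Finset (Fin n)) : ℝ :=
  (∏ j ∈ S, (x j - ℓ) / (u - ℓ)) *
    ∏ j ∈ (univ : Finset (Fin n)) \ S, (1 - (x j - ℓ) / (u - ℓ))

/-- The vertex of the box whose coordinates in `S` are `u` and others are `ℓ`. -/
noncomputable def vSpt (ℓ u : ℝ) (S : Finset (Fin n)) : Fin n → ℝ :=
  fun j => if j ∈ S then u else ℓ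

lemma interp (hlu : ℓ < u) (x : Fin n → ℝ) (J : Finset (Fin n)) :
    ∑ S ∈ (univ : Finset (Fin n)).powerset,
        lamW ℓ u x S * ∏ j ∈ J, vSpt ℓ u S j = ∏ j ∈ J, x j := by
  have hne : u - ℓ ≠ 0 := by linarith
  have h := Finset.prod_add
      (fun j : Fin n => (x j - ℓ) / (u - ℓ) * (if j ∈ J then u else 1))
      (fun j : Fin n => (1 - (x j - ℓ) / (u - ℓ)) * (if j ∈ J then ℓ else 1))
      univ
  have hfact : ∀ j : Fin n, (x j - ℓ) / (u - ℓ) * (if j ∈ J then u else 1)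
      + (1 - (x j - ℓ) / (u - ℓ)) * (if j ∈ J then ℓ else 1)
      = if j ∈ J then x j else 1 := by
    intro j
    by_cases hj : j ∈ J
    · simp only [hj, if_true]
      field_simp
      ring
    · simp only [hj, if_false]
      ring
  have hL : ∏ j : Fin n, ((x j - ℓ) / (u - ℓ) * (if j ∈ J then u else 1)
      + (1 - (x j - ℓ) / (u - ℓ)) * (if j ∈ J then ℓ else 1)) = ∏ j ∈ J, x j := by
    rw [Finset.prod_congr rfl (fun j _ => hfact j), Finset.prod_ite_mem, Finset.univ_inter]
  rw [hL] at h
  rw [h]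
  refine Finset.sum_congr rfl fun S _ => ?_
  rw [Finset.prod_mul_distrib, Finset.prod_mul_distrib,
    Finset.prod_ite_mem S J (fun _ => u), Finset.prod_ite_mem (univ \ S) J (fun _ => ℓ)]
  have hv : ∏ j ∈ J, vSpt ℓ u S j = (∏ _j ∈ S ∩ J, u) * ∏ _j ∈ (univ \ S) ∩ J, ℓ := by
    unfold vSpt
    rw [Finset.prod_ite (fun _ => u) (fun _ => ℓ)]
    congr 1
    · apply Finset.prod_congr _ (fun _ _ => rfl)
      ext j; simp [and_comm]
    · apply Finset.prod_congr _ (fun _ _ => rfl)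
      ext j; simp [and_comm]
  rw [hv, lamW]; ring

lemma lamW_nonneg (hlu : ℓ < u) {x : Fin n → ℝ} (hx : x ∈ Xbox n ℓ u)
    (S : Finset (Fin n)) : 0 ≤ lamW ℓ u x S := by
  have hpos : (0:ℝ) < u - ℓ := by linarith
  apply mul_nonneg
  · apply Finset.prod_nonneg; intro j _
    exact div_nonneg (by have := (hx j).1; linarith) hpos.le
  · apply Finset.prod_nonneg; intro j _
    have ht : (x j - ℓ)/(u-ℓ) ≤ 1 := by
      rw [div_le_one hpos]; have := (hx j).2; linarith
    linarith

lemma vSpt_mem (hlu : ℓ < u) (S : Finset (Fin n)) : vSpt ℓ u S ∈ Xbox n ℓ u := by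
  intro j
  unfold vSpt
  by_cases hj : j ∈ S <;> simp [hj, Set.mem_Icc, le_of_lt hlu]

lemma interpF (hlu : ℓ < u) (c : ℕ → ℝ) (β₀ : ℝ) (β : Fin n → ℝ) (β' : ℝ)
    (x : Fin n → ℝ) :
    ineqLhs n β₀ β β' (x, mPoly n c x)
    = ∑ S ∈ (univ : Finset (Fin n)).powerset,
        lamW ℓ u x S * ineqLhs n β₀ β β' (vSpt ℓ u S, mPoly n c (vSpt ℓ u S)) := by
  have h1 : ∑ S ∈ (univ : Finset (Fin n)).powerset, lamW ℓ u x S = 1 := by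
    have := interp hlu x (∅ : Finset (Fin n)); simpa using this
  have h2 : ∀ j : Fin n, ∑ S ∈ (univ : Finset (Fin n)).powerset,
      lamW ℓ u x S * vSpt ℓ u S j = x j := by
    intro j; have := interp hlu x {j}; simpa using this
  have h3 : ∑ S ∈ (univ : Finset (Fin n)).powerset,
      lamW ℓ u x S * mPoly n c (vSpt ℓ u S) = mPoly n c x := by
    unfold mPoly
    simp only [Finset.mul_sum]
    rw [Finset.sum_comm]
    refine Finset.sum_congr rfl fun i _ => ?_
    rw [Finset.sum_comm]
    refine Finset.sum_congr rfl fun J _ => ?_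
    calc ∑ S ∈ (univ : Finset (Fin n)).powerset,
          lamW ℓ u x S * (c i * ∏ j ∈ J, vSpt ℓ u S j)
        = c i * ∑ S ∈ (univ : Finset (Fin n)).powerset,
            lamW ℓ u x S * ∏ j ∈ J, vSpt ℓ u S j := by
          rw [Finset.mul_sum]; exact Finset.sum_congr rfl fun S _ => by ring
      _ = c i * ∏ j ∈ J, x j := by rw [interp hlu x J]
  have expand : ∀ S : Finset (Fin n),
      lamW ℓ u x S * (β₀ + ∑ j, β j * vSpt ℓ u S j + β' * mPoly n c (vSpt ℓ u S))
      = lamW ℓ u x S * β₀ + (∑ j, β j * (lamW ℓ u x S * vSpt ℓ u S j))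
        + β' * (lamW ℓ u x S * mPoly n c (vSpt ℓ u S)) := by
    intro S
    rw [mul_add, mul_add, Finset.mul_sum]
    congr 1
    · congr 1
      exact Finset.sum_congr rfl fun j _ => by ring
    · ring
  unfold ineqLhs
  symm
  calc ∑ S ∈ (univ : Finset (Fin n)).powerset,
        lamW ℓ u x S * (β₀ + ∑ j, β j * vSpt ℓ u S j + β' * mPoly n c (vSpt ℓ u S))
      = ∑ S ∈ (univ : Finset (Fin n)).powerset,
          (lamW ℓ u x S * β₀ + (∑ j, β j * (lamW ℓ u x S * vSpt ℓ u S j))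
            + β' * (lamW ℓ u x S * mPoly n c (vSpt ℓ u S))) :=
        Finset.sum_congr rfl fun S _ => expand S
    _ = (∑ S ∈ (univ : Finset (Fin n)).powerset, lamW ℓ u x S * β₀)
        + (∑ S ∈ (univ : Finset (Fin n)).powerset, ∑ j, β j * (lamW ℓ u x S * vSpt ℓ u S j))
        + ∑ S ∈ (univ : Finset (Fin n)).powerset,
            β' * (lamW ℓ u x S * mPoly n c (vSpt ℓ u S)) := by
        rw [Finset.sum_add_distrib, Finset.sum_add_distrib]
    _ = β₀ + (∑ j, β j * x j) + β' * mPoly n c x := by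
        congr 1
        · congr 1
          · rw [← Finset.sum_mul, h1, one_mul]
          · rw [Finset.sum_comm]
            refine Finset.sum_congr rfl fun j _ => ?_
            rw [← Finset.mul_sum, h2 j]
        · rw [← Finset.mul_sum, h3]

end Aux


/-- For any valid inequality for `conv(G)` and `x̃ ∈ X`, the following
are equivalent: (1) `(x̃, m(x̃))` satisfies it exactly; (2) `(x̂, m(x̂))` satisfies it
exactly for every `x̂ ∈ X` agreeing with `x̃` on the coordinates where `x̃` is at a
bound; (3) likewise for every vertex `x̂` of `X`. -/
theorem stmt14 (n : ℕ) (hn : 2 ≤ n) (ℓ u : ℝ) (hlu : ℓ < u) (c : ℕ → ℝ)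
    (β₀ : ℝ) (β : Fin n → ℝ) (β' : ℝ)
    (hvalid : IsValid n ℓ u c β₀ β β')
    (xt : Fin n → ℝ) (hxt : xt ∈ Xbox n ℓ u) :
    (ExactAt n β₀ β β' (xt, mPoly n c xt) ↔
      ∀ xh ∈ Xbox n ℓ u,
        (∀ j, xt j = ℓ → xh j = ℓ) → (∀ j, xt j = u → xh j = u) →
        ExactAt n β₀ β β' (xh, mPoly n c xh)) ∧
    (ExactAt n β₀ β β' (xt, mPoly n c xt) ↔
      ∀ xh : Fin n → ℝ, (∀ j, xh j = ℓ ∨ xh j = u) →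
        (∀ j, xt j = ℓ → xh j = ℓ) → (∀ j, xt j = u → xh j = u) →
        ExactAt n β₀ β β' (xh, mPoly n c xh)) := by
  -- F is nonnegative on the box
  have hFnn : ∀ x ∈ Xbox n ℓ u, 0 ≤ ineqLhs n β₀ β β' (x, mPoly n c x) := by
    intro x hx
    exact hvalid _ (subset_convexHull ℝ _ ⟨hx, rfl⟩)
  have hne : u - ℓ ≠ 0 := by linarith
  -- (1) → (3)
  have h13 : ExactAt n β₀ β β' (xt, mPoly n c xt) →
      ∀ xh : Fin n → ℝ, (∀ j, xh j = ℓ ∨ xh j = u) →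
        (∀ j, xt j = ℓ → xh j = ℓ) → (∀ j, xt j = u → xh j = u) →
        ExactAt n β₀ β β' (xh, mPoly n c xh) := by
    intro h1 xh hv hl hu
    classical
    set S : Finset (Fin n) := univ.filter (fun j => xh j = u) with hS
    have hxh : vSpt ℓ u S = xh := by
      funext j
      by_cases hj : xh j = u
      · simp [vSpt, hS, hj]
      · have hℓ : xh j = ℓ := (hv j).resolve_right hj
        simp only [vSpt, hS, Finset.mem_filter, Finset.mem_univ, true_and, hj, if_false]
        exact hℓ.symm
    have hzero := h1
    unfold ExactAt at hzero ⊢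
    rw [interpF hlu c β₀ β β' xt] at hzero
    have hterm := (Finset.sum_eq_zero_iff_of_nonneg (fun T _ =>
        mul_nonneg (lamW_nonneg hlu hxt T)
          (hFnn _ (vSpt_mem hlu T)))).mp hzero
    have hSmem : S ∈ (univ : Finset (Fin n)).powerset :=
      Finset.mem_powerset.mpr (Finset.subset_univ S)
    have hpos : 0 < lamW ℓ u xt S := by
      apply mul_pos
      · apply Finset.prod_pos
        intro j hj
        have hju : xh j = u := (Finset.mem_filter.mp hj).2
        have hne' : xt j ≠ ℓ := by
          intro h
          have := hl j h
          rw [this] at hju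
          exact absurd hju (ne_of_lt hlu)
        have h1' : ℓ < xt j := lt_of_le_of_ne (hxt j).1 (Ne.symm hne')
        apply div_pos <;> linarith
      · apply Finset.prod_pos
        intro j hj
        have hjn : j ∉ S := (Finset.mem_sdiff.mp hj).2
        have hjl : xh j = ℓ := by
          rcases hv j with h | h
          · exact h
          · exact absurd (Finset.mem_filter.mpr ⟨Finset.mem_univ j, h⟩) hjn
        have hne' : xt j ≠ u := by
          intro h
          have := hu j h
          rw [this] at hjl
          exact absurd hjl.symm (ne_of_lt hlu)
        have h2' : xt j < u := lt_of_le_of_ne (hxt j).2 hne'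
        have : (xt j - ℓ) / (u - ℓ) < 1 := by
          rw [div_lt_one (by linarith : (0:ℝ) < u - ℓ)]
          linarith
        linarith
    have := hterm S hSmem
    rcases mul_eq_zero.mp this with h | h
    · exact absurd h (ne_of_gt hpos)
    · rw [← hxh]; exact h
  -- (3) → (2)
  have h32 : (∀ xh : Fin n → ℝ, (∀ j, xh j = ℓ ∨ xh j = u) →
        (∀ j, xt j = ℓ → xh j = ℓ) → (∀ j, xt j = u → xh j = u) →
        ExactAt n β₀ β β' (xh, mPoly n c xh)) →
      ∀ xh ∈ Xbox n ℓ u,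
        (∀ j, xt j = ℓ → xh j = ℓ) → (∀ j, xt j = u → xh j = u) →
        ExactAt n β₀ β β' (xh, mPoly n c xh) := by
    intro h3 xh _hxh hl hu
    unfold ExactAt
    rw [interpF hlu c β₀ β β' xh]
    apply Finset.sum_eq_zero
    intro T _
    by_cases hT : lamW ℓ u xh T = 0
    · rw [hT, zero_mul]
    · have hF : ExactAt n β₀ β β' (vSpt ℓ u T, mPoly n c (vSpt ℓ u T)) := by
        apply h3
        · intro j
          by_cases hj : j ∈ T
          · right; simp [vSpt, hj]
          · left; simp [vSpt, hj]
        · intro j hjl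
          have hxhj : xh j = ℓ := hl j hjl
          by_cases hj : j ∈ T
          · exfalso
            apply hT
            unfold lamW
            apply mul_eq_zero_of_left
            apply Finset.prod_eq_zero hj
            rw [hxhj]
            simp
          · simp [vSpt, hj]
        · intro j hju
          have hxhj : xh j = u := hu j hju
          by_cases hj : j ∈ T
          · simp [vSpt, hj]
          · exfalso
            apply hT
            unfold lamW
            apply mul_eq_zero_of_right
            apply Finset.prod_eq_zero (Finset.mem_sdiff.mpr ⟨Finset.mem_univ j, hj⟩)
            rw [hxhj, div_self hne]
            ring
      rw [hF, mul_zero]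
  -- (2) → (1)
  have h21 : (∀ xh ∈ Xbox n ℓ u,
        (∀ j, xt j = ℓ → xh j = ℓ) → (∀ j, xt j = u → xh j = u) →
        ExactAt n β₀ β β' (xh, mPoly n c xh)) →
      ExactAt n β₀ β β' (xt, mPoly n c xt) :=
    fun h2 => h2 xt hxt (fun _ h => h) (fun _ h => h)
  constructor
  · exact ⟨fun h1 => h32 (h13 h1), h21⟩
  · exact ⟨h13, fun h3 => h21 (h32 h3)⟩
end
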